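/- arXiv:2005.14180 — 6 statements merged into one kernel-verified Lean document; each statement's English description precedes it below -/
import Mathlib

section
/- Let 𝒳 be a finite nonempty set, let κ > 0, and let z ∈ ℂ with Im z > 0 and |Re z| ≤ 2 − κ. Suppose two vectors (g_x)_{x∈𝒳}, (ε_x)_{x∈𝒳} ∈ ℂ^𝒳 satisfy, for every x ∈ 𝒳, the identity 1/g_x = −z − |𝒳|^{−1}·∑_{y∈𝒳} g_y + ε_x. Then there are constants b, C ∈ (0, ∞), depending only on κ, such that: if max_{x∈𝒳} |g_x − m(z)| ≤ b then max_{x∈𝒳} |g_x − m(z)| ≤ C·max_{x∈𝒳} |ε_x|. -/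
noncomputable section

set_option maxHeartbeats 1600000 in
/-- Lemma 3.14 (Stability of the self-consistent equation for `m`).
Here `m` is the Stieltjes transform of the semicircle law at `z`, i.e. the unique
solution in the upper half-plane of `m = 1/(−z − m)`. -/
theorem stability_self_consistent_equation :
    ∀ κ : ℝ, 0 < κ → ∃ b C : ℝ, 0 < b ∧ 0 < C ∧
    ∀ (𝒳 : Type) (_ : Fintype 𝒳) (_ : Nonempty 𝒳) (z : ℂ) (g ε : 𝒳 → ℂ) (m : ℂ),
      0 < z.im → |z.re| ≤ 2 - κ →
      0 < m.im → m = 1 / (-z - m) →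
      (∀ x, 1 / g x = -z - (Fintype.card 𝒳 : ℂ)⁻¹ * ∑ y, g y + ε x) →
      (∀ x, ‖g x - m‖ ≤ b) →
      ∀ x, ‖g x - m‖ ≤ C * ⨆ y, ‖ε y‖ := by
  intro κ hκ
  set δ : ℝ := min (3/4) (κ/2) with hδdef
  have hδpos : 0 < δ := lt_min (by norm_num) (by linarith)
  have hδle : δ ≤ 3/4 := min_le_left _ _
  refine ⟨min (δ/2) (1/2), 9/(2*δ) + 3/2, lt_min (by linarith) (by norm_num),
    by positivity, ?_⟩
  intro 𝒳 inst1 inst2 z g ε m himz hrez himm hm hg hb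
  set b : ℝ := min (δ/2) (1/2) with hbdef
  set C : ℝ := 9/(2*δ) + 3/2 with hCdef
  have hb2 : b ≤ 1/2 := min_le_right _ _
  have hbδ : b ≤ δ/2 := min_le_left _ _
  have hC6 : 6 ≤ C := by
    have h : 6 ≤ 9/(2*δ) := by
      rw [le_div_iff₀ (by positivity)]; linarith
    rw [hCdef]; linarith
  have hδκ : δ ≤ κ/2 := min_le_right _ _
  clear_value δ b C
  -- basic facts about m
  have hm0 : m ≠ 0 := by
    intro h; rw [h] at himm; simp at himm
  have hden : -z - m ≠ 0 := by
    intro h; rw [h] at hm; simp at hm; exact hm0 hm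
  have hm1 : m * (-z - m) = 1 := by
    nth_rewrite 1 [hm]; exact one_div_mul_cancel hden
  have hinv : m⁻¹ = -z - m := by
    field_simp
    linear_combination -hm1
  -- |m| ≤ 1
  have hns : 0 < Complex.normSq m := Complex.normSq_pos.mpr hm0
  have hmle : ‖m‖ ≤ 1 := by
    have him := congrArg Complex.im hinv
    simp [Complex.inv_im, Complex.sub_im, Complex.neg_im] at him
    -- him : -m.im / normSq m = -z.im - m.im  (shape may vary)
    have h2 : m.im = (z.im + m.im) * Complex.normSq m := by
      field_simp at him
      linarith
    have hsq : Complex.normSq m < 1 := by nlinarith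
    have habs : ‖m‖^2 = Complex.normSq m := by
      rw [← Complex.sq_norm]
    nlinarith [norm_nonneg m]
  -- lower bound on ‖1 - m^2‖
  have h1m2 : δ ≤ ‖1 - m^2‖ := by
    have h1m2eq : 1 - m^2 = -(m * (z + 2*m)) := by linear_combination -hm1
    rcases le_or_gt ‖m‖ (1/2) with hsm | hlg
    · have h1 : ‖(1:ℂ)‖ - ‖m^2‖ ≤ ‖1 - m^2‖ := norm_sub_norm_le _ _
      have h2 : ‖m^2‖ = ‖m‖^2 := norm_pow m 2
      have h3 : ‖(1:ℂ)‖ = (1:ℝ) := norm_one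
      nlinarith [norm_nonneg m]
    · have hz2 : κ ≤ ‖z - 2‖ := by
        have h := Complex.abs_re_le_norm (z - 2)
        have hre : (z - 2).re = z.re - 2 := by simp
        have habs := abs_le.mp hrez
        have : ‖z - 2‖ = ‖z - 2‖ := rfl
        rw [this]
        rw [hre] at h
        have := neg_abs_le (z.re - 2)
        linarith
      have hz2' : κ ≤ ‖z + 2‖ := by
        have h := Complex.abs_re_le_norm (z + 2)
        have hre : (z + 2).re = z.re + 2 := by simp
        have habs := abs_le.mp hrez
        have : ‖z + 2‖ = ‖z + 2‖ := rfl
        rw [this]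
        rw [hre] at h
        have := le_abs_self (z.re + 2)
        linarith
      have h4 : (z + 2*m)^2 = (z - 2) * (z + 2) := by linear_combination (-4)*hm1
      have hsq2 : κ^2 ≤ ‖z + 2*m‖^2 := by
        have : ‖z + 2*m‖^2 = ‖z - 2‖ * ‖z + 2‖ := by
          rw [← norm_pow, h4, norm_mul]
        rw [this]
        nlinarith
      have hzlow : κ ≤ ‖z + 2*m‖ := by nlinarith [norm_nonneg (z + 2*m)]
      rw [h1m2eq, norm_neg, norm_mul]
      nlinarith
  -- setup for the vector argument
  set S : ℂ := (Fintype.card 𝒳 : ℂ)⁻¹ * ∑ y, g y with hSdef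
  set E : ℝ := ⨆ y, ‖ε y‖ with hEdef
  have hcard : (0:ℝ) < Fintype.card 𝒳 := by exact_mod_cast Fintype.card_pos
  have hcardC : (Fintype.card 𝒳 : ℂ) ≠ 0 := by
    exact_mod_cast (Nat.cast_ne_zero (R := ℂ)).mpr Fintype.card_ne_zero
  have hE : ∀ x, ‖ε x‖ ≤ E := fun x =>
    le_ciSup (f := fun y => ‖ε y‖) ((Set.finite_range _).bddAbove) x
  have hE0 : 0 ≤ E := (norm_nonneg _).trans (hE (Classical.arbitrary 𝒳))
  have havg : ∀ (f : 𝒳 → ℂ) (M : ℝ), (∀ x, ‖f x‖ ≤ M) →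
      ‖(Fintype.card 𝒳 : ℂ)⁻¹ * ∑ y, f y‖ ≤ M := by
    intro f M hf
    have h1 : ‖∑ y, f y‖ ≤ (Fintype.card 𝒳 : ℝ) * M := by
      calc ‖∑ y, f y‖ ≤ ∑ y, ‖f y‖ := norm_sum_le _ _
        _ ≤ ∑ _y : 𝒳, M := Finset.sum_le_sum (fun i _ => hf i)
        _ = (Fintype.card 𝒳 : ℝ) * M := by
            rw [Finset.sum_const, Finset.card_univ, nsmul_eq_mul]
    rw [norm_mul]
    have hn : ‖((Fintype.card 𝒳 : ℂ))⁻¹‖ = (Fintype.card 𝒳 : ℝ)⁻¹ := by simp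
    rw [hn]
    have h2 : (Fintype.card 𝒳 : ℝ)⁻¹ * ‖∑ y, f y‖ ≤
        (Fintype.card 𝒳 : ℝ)⁻¹ * ((Fintype.card 𝒳 : ℝ) * M) :=
      mul_le_mul_of_nonneg_left h1 (by positivity)
    rwa [inv_mul_cancel_left₀ hcard.ne'] at h2
  have hsum : ∑ y, (g y - m) = (∑ y, g y) - (Fintype.card 𝒳 : ℂ) * m := by
    rw [Finset.sum_sub_distrib, Finset.sum_const, Finset.card_univ, nsmul_eq_mul]
  have hS : S - m = (Fintype.card 𝒳 : ℂ)⁻¹ * ∑ y, (g y - m) := by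
    rw [hsum, mul_sub, inv_mul_cancel_left₀ hcardC]
  have hSm : ‖S - m‖ ≤ b := by
    rw [hS]; exact havg _ b hb
  clear_value S E
  by_cases hzero : ∃ x0, g x0 = 0
  · -- degenerate case: some g x0 = 0; then ε x0 is large
    obtain ⟨x0, hx0⟩ := hzero
    have h := hg x0
    rw [hx0] at h
    simp only [div_zero] at h
    have he : ε x0 = z + S := by linear_combination -h
    have hmb : ‖m‖ ≤ b := by
      have := hb x0; rwa [hx0, zero_sub, norm_neg] at this
    have hm_pos : 0 < ‖m‖ := norm_pos_iff.mpr hm0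
    have hzm' : ‖m‖ * ‖z + m‖ = 1 := by
      rw [← norm_mul]
      have h' : m * (z + m) = -1 := by linear_combination -hm1
      rw [h', norm_neg, norm_one]
    have hεlow : 1 ≤ ‖ε x0‖ := by
      rw [he]
      have h1 : ‖z + m‖ ≤ ‖z + S‖ + ‖m - S‖ := by
        have := norm_add_le (z + S) (m - S)
        have heq2 : (z + S) + (m - S) = z + m := by ring
        rwa [heq2] at this
      have hms : ‖m - S‖ = ‖S - m‖ := norm_sub_rev m S
      have hm12 : ‖m‖ ≤ 1/2 := hmb.trans hb2
      have h2 : 2 ≤ ‖z + m‖ := by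
        have hmul : ‖m‖ * ‖z + m‖ ≤ (1/2) * ‖z + m‖ :=
          mul_le_mul_of_nonneg_right hm12 (norm_nonneg _)
        linarith
      linarith
    intro x
    have hE1 : 1 ≤ E := hεlow.trans (hE x0)
    have hCE : 6 * 1 ≤ C * E := mul_le_mul hC6 hE1 one_pos.le (by linarith)
    have hgb := hb x
    linarith
  · push_neg at hzero
    have hgx : ∀ x, g x * (-z - S + ε x) = 1 := by
      intro x
      have h := hg x
      rw [div_eq_iff (hzero x)] at h
      linear_combination -h
    have key : ∀ x, g x - m = g x * m * ((S - m) - ε x) := by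
      intro x
      linear_combination m * hgx x - (g x) * hm1
    have hgbound : ∀ x, ‖g x‖ ≤ 3/2 := by
      intro x
      have h : ‖g x‖ ≤ ‖g x - m‖ + ‖m‖ := by
        simpa using norm_add_le (g x - m) m
      linarith [hb x]
    set T : ℂ := (Fintype.card 𝒳 : ℂ)⁻¹ * ∑ x, g x * ε x with hTdef
    clear_value T
    have hexp : ∑ x, (g x * m * ((S - m) - ε x)) =
        m * (S - m) * (∑ x, g x) - m * ∑ x, g x * ε x := by
      rw [Finset.mul_sum, Finset.mul_sum, ← Finset.sum_sub_distrib]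
      exact Finset.sum_congr rfl (fun x _ => by ring)
    have havgkey : S - m = m * (S - m) * S - m * T := by
      calc S - m = (Fintype.card 𝒳 : ℂ)⁻¹ * ∑ y, (g y - m) := hS
        _ = (Fintype.card 𝒳 : ℂ)⁻¹ * ∑ x, (g x * m * ((S - m) - ε x)) := by
            congr 1; exact Finset.sum_congr rfl (fun x _ => key x)
        _ = m * (S - m) * S - m * T := by
            rw [hexp, hSdef, hTdef]; ring
    have heq : (S - m) * (1 - m * S) = -(m * T) := by linear_combination havgkey
    have hT : ‖T‖ ≤ 3/2 * E := by
      rw [hTdef]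
      refine havg _ _ (fun x => ?_)
      rw [norm_mul]
      exact mul_le_mul (hgbound x) (hE x) (norm_nonneg _) (by norm_num)
    have hden2 : δ/2 ≤ ‖1 - m * S‖ := by
      have hsplit : (1 - m^2) - m * (S - m) = 1 - m * S := by ring
      have h1 : ‖m * (S - m)‖ ≤ b := by
        rw [norm_mul]
        calc ‖m‖ * ‖S - m‖ ≤ 1 * b :=
              mul_le_mul hmle hSm (norm_nonneg _) zero_le_one
          _ = b := one_mul b
      calc δ/2 = δ - δ/2 := by ring
        _ ≤ ‖1 - m^2‖ - ‖m * (S - m)‖ := by linarith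
        _ ≤ ‖(1 - m^2) - m * (S - m)‖ := norm_sub_norm_le _ _
        _ = ‖1 - m * S‖ := by rw [hsplit]
    have hw : ‖S - m‖ * δ ≤ 3 * E := by
      have h1 : ‖S - m‖ * ‖1 - m * S‖ = ‖m * T‖ := by
        rw [← norm_mul, heq, norm_neg]
      have h2 : ‖m * T‖ ≤ 3/2 * E := by
        rw [norm_mul]
        calc ‖m‖ * ‖T‖ ≤ 1 * (3/2 * E) :=
              mul_le_mul hmle hT (norm_nonneg _) zero_le_one
          _ = 3/2 * E := one_mul _
      have h5 : ‖S - m‖ * (δ/2) ≤ ‖S - m‖ * ‖1 - m * S‖ :=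
        mul_le_mul_of_nonneg_left hden2 (norm_nonneg (S - m))
      linarith only [h1, h2, h5]
    intro x
    have h4 : ‖(S - m) - ε x‖ ≤ ‖S - m‖ + E :=
      (norm_sub_le _ _).trans (add_le_add le_rfl (hE x))
    have h9 : 3/2 * ‖S - m‖ ≤ 9 * E / (2*δ) := by
      rw [le_div_iff₀ (by linarith : (0:ℝ) < 2*δ)]
      linarith only [hw]
    calc ‖g x - m‖ = ‖g x‖ * ‖m‖ * ‖(S - m) - ε x‖ := by
          rw [key x, norm_mul, norm_mul]
      _ ≤ 3/2 * 1 * (‖S - m‖ + E) := by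
          have t1 : ‖g x‖ * ‖m‖ ≤ 3/2 * 1 :=
            mul_le_mul (hgbound x) hmle (norm_nonneg _) (by norm_num)
          exact mul_le_mul t1 h4 (norm_nonneg _) (by norm_num)
      _ = 3/2 * ‖S - m‖ + 3/2 * E := by ring
      _ ≤ 9 * E / (2*δ) + 3/2 * E := by linarith only [h9]
      _ = C * E := by rw [hCdef]; ring
end
end

section
/- There is a universal constant c > 0 with the following property. Let d ≥ 1 and r ≥ 2 be integers, let G be a finite graph with a distinguished vertex o such that the subgraph induced by G on the ball B_r(o) of radius r around o is a tree in which every vertex at distance at most r − 1 from o has degree exactly d in G. Let S be 1/d times the adjacency matrix of G, let α ∈ ℂ with |α| = 1, and assume that α·I − S is invertible. Then the operator norm induced by the sup-norm satisfies ‖(α·I − S)^{−1}‖_{∞→∞} ≥ c·min(r/log r, d). -/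
noncomputable section

namespace Instability
set_option linter.unusedSectionVars false
set_option maxHeartbeats 1000000

/-- Ball of radius `r` around `x` in the graph metric. -/
def gball {V : Type*} (G : SimpleGraph V) (x : V) (r : ℕ) : Set V :=
  {y | G.Reachable x y ∧ G.dist x y ≤ r}

open SimpleGraph

section Graph

variable {V : Type} [DecidableEq V] {G : SimpleGraph V} {o : V} {r : ℕ}

lemma lift_walk {s : Set V} {u v : V} (p : G.Walk u v) :
    ∀ (hu : u ∈ s) (hv : v ∈ s), (∀ x ∈ p.support, x ∈ s) →
    ∃ q : (G.induce s).Walk ⟨u, hu⟩ ⟨v, hv⟩,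
      q.map (SimpleGraph.Embedding.induce s).toHom = p := by
  induction p with
  | nil => exact fun hu hv _ => ⟨.nil, by simp⟩
  | @cons a b c h p ih =>
    intro hu hv hs
    have hb : b ∈ s := hs b (by simp)
    obtain ⟨q, hq⟩ := ih hb hv (fun x hx => hs x (by simp [hx]))
    exact ⟨.cons (by simpa using h) q, by simp [hq]⟩

lemma ball_path_unique (hT : (SimpleGraph.induce (gball G o r) G).IsTree)
    {v : V} (p q : G.Walk o v) (hp : p.IsPath) (hq : q.IsPath)
    (hps : ∀ x ∈ p.support, x ∈ gball G o r) (hqs : ∀ x ∈ q.support, x ∈ gball G o r) :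
    p = q := by
  have ho : o ∈ gball G o r := hps o p.start_mem_support
  have hv : v ∈ gball G o r := hps v p.end_mem_support
  obtain ⟨p', hp'⟩ := lift_walk p ho hv hps
  obtain ⟨q', hq'⟩ := lift_walk q ho hv hqs
  have hp'path : p'.IsPath := Walk.IsPath.of_map (f := (SimpleGraph.Embedding.induce _).toHom)
    (by rw [hp']; exact hp)
  have hq'path : q'.IsPath := Walk.IsPath.of_map (f := (SimpleGraph.Embedding.induce _).toHom)
    (by rw [hq']; exact hq)
  have h1 := (hT.existsUnique_path ⟨o, ho⟩ ⟨v, hv⟩).unique hp'path hq'path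
  rw [← hp', ← hq', h1]

lemma exists_spath {v : V} (hv : G.Reachable o v) :
    ∃ p : G.Walk o v, p.IsPath ∧ p.length = G.dist o v ∧
      ∀ x ∈ p.support, G.Reachable o x ∧ G.dist o x ≤ G.dist o v ∧
        (x ≠ v → G.dist o x < G.dist o v) := by
  obtain ⟨p, hlen⟩ := hv.exists_walk_length_eq_dist
  refine ⟨p, p.isPath_of_length_eq_dist hlen, hlen, ?_⟩
  intro x hx
  have h1 : G.dist o x ≤ (p.takeUntil x hx).length := dist_le _
  have hr : G.Reachable o x := ⟨p.takeUntil x hx⟩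
  have hlen2 : (p.takeUntil x hx).length + (p.dropUntil x hx).length = p.length := by
    rw [← Walk.length_append, p.take_spec hx]
  refine ⟨hr, by omega, ?_⟩
  intro hne
  have hdrop : (p.dropUntil x hx).length ≠ 0 := fun h0 => hne (Walk.eq_of_length_eq_zero h0)
  omega

lemma dist_adj_le {a b : V} (hr : G.Reachable o a) (h : G.Adj a b) :
    G.dist o b ≤ G.dist o a + 1 := by
  obtain ⟨p, hlen⟩ := hr.exists_walk_length_eq_dist
  calc G.dist o b ≤ (p.concat h).length := dist_le _
  _ = G.dist o a + 1 := by rw [Walk.length_concat, hlen]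

lemma no_same_level (hT : (SimpleGraph.induce (gball G o r) G).IsTree)
    {u v : V} (huv : G.Adj v u) (hrv : G.Reachable o v) (hru : G.Reachable o u)
    (hk : G.dist o u = G.dist o v) (hkr : G.dist o v ≤ r) : False := by
  obtain ⟨p, hp, hplen, hpsup⟩ := exists_spath hrv
  obtain ⟨q, hq, hqlen, hqsup⟩ := exists_spath hru
  have hunotp : u ∉ p.support := by
    intro h
    rcases hpsup u h with ⟨_, _, hlt⟩
    by_cases hu : u = v
    · exact G.irrefl (hu ▸ huv)
    · have := hlt hu; omega
  have hconc : (p.concat huv).IsPath := by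
    rw [Walk.isPath_def, Walk.support_concat]
    rw [← List.concat_eq_append]; exact List.Nodup.concat hunotp hp.support_nodup
  have hsup : ∀ x ∈ (p.concat huv).support, x ∈ gball G o r := by
    intro x hx
    rw [Walk.support_concat, List.mem_append] at hx
    rcases hx with hx | hx
    · rcases hpsup x hx with ⟨h1, h2, _⟩; exact ⟨h1, le_trans h2 hkr⟩
    · simp at hx; subst hx; exact ⟨hru, by omega⟩
  have := ball_path_unique hT (p.concat huv) q hconc hq hsup
    (fun x hx => by rcases hqsup x hx with ⟨h1, h2, _⟩; exact ⟨h1, by omega⟩)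
  have hlen := congrArg Walk.length this
  rw [Walk.length_concat] at hlen
  omega

lemma getVert_concat_self {a b c : V} (p : G.Walk a b) (h : G.Adj b c) :
    (p.concat h).getVert p.length = b := by
  rw [Walk.concat_eq_append, Walk.getVert_append]
  simp

lemma parent_spec (hT : (SimpleGraph.induce (gball G o r) G).IsTree)
    {v : V} (hrv : G.Reachable o v) (h1 : 1 ≤ G.dist o v) (hr2 : G.dist o v ≤ r) :
    ∃ pa : V, (G.Adj v pa ∧ G.Reachable o pa ∧ G.dist o pa + 1 = G.dist o v) ∧
      ∀ u, G.Adj v u → G.dist o u < G.dist o v → u = pa := by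
  classical
  obtain ⟨p, hp, hplen, hpsup⟩ := exists_spath hrv
  have hpne : p.length ≠ 0 := by omega
  obtain ⟨pa, hadj, hrpa, hdpa⟩ : ∃ pa, G.Adj v pa ∧ G.Reachable o pa ∧
      G.dist o pa + 1 = G.dist o v := by
    cases p with
    | nil => simp at hpne
    | @cons _ b _ hab p' =>
      obtain ⟨x, q, h', hc⟩ := Walk.exists_cons_eq_concat hab p'
      have hq : q.length + 1 = G.dist o v := by
        have := congrArg Walk.length hc
        rw [Walk.length_concat] at this
        simpa [← this] using hplen
      have hrx : G.Reachable o x := ⟨q⟩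
      have hdx : G.dist o x ≤ q.length := dist_le q
      have hge : G.dist o v ≤ G.dist o x + 1 := dist_adj_le hrx h'
      exact ⟨x, h'.symm, hrx, by omega⟩
  refine ⟨pa, ⟨hadj, hrpa, hdpa⟩, ?_⟩
  intro u hu hdu
  have hru : G.Reachable o u := hrv.trans hu.reachable
  have hdueq : G.dist o u + 1 = G.dist o v := by
    have := dist_adj_le hru hu.symm; omega
  have key : ∀ w : V, G.Adj v w → G.dist o w + 1 = G.dist o v →
      ∃ pw : G.Walk o v, pw.IsPath ∧ (∀ x ∈ pw.support, x ∈ gball G o r) ∧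
        pw.getVert (G.dist o v - 1) = w := by
    intro w hw hdw
    have hrw : G.Reachable o w := hrv.trans hw.reachable
    obtain ⟨pw, hpw, hpwlen, hpwsup⟩ := exists_spath hrw
    have hvnot : v ∉ pw.support := by
      intro hmem
      rcases hpwsup v hmem with ⟨_, h2, _⟩
      omega
    refine ⟨pw.concat hw.symm, ?_, ?_, ?_⟩
    · rw [Walk.isPath_def, Walk.support_concat]
      rw [← List.concat_eq_append]; exact List.Nodup.concat hvnot hpw.support_nodup
    · intro x hx
      rw [Walk.support_concat, List.mem_append] at hx
      rcases hx with hx | hx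
      · rcases hpwsup x hx with ⟨h1, h2, _⟩; exact ⟨h1, by omega⟩
      · simp at hx; subst hx; exact ⟨hrv, hr2⟩
    · have : pw.length = G.dist o v - 1 := by omega
      rw [← this]; exact getVert_concat_self pw hw.symm
  obtain ⟨p1, hp1, hs1, hg1⟩ := key u hu hdueq
  obtain ⟨p2, hp2, hs2, hg2⟩ := key pa hadj hdpa
  have := ball_path_unique hT p1 p2 hp1 hp2 hs1 hs2
  rw [← hg1, ← hg2, this]

variable [Fintype V] [DecidableRel G.Adj] {d : ℕ}

lemma levels (hT : (SimpleGraph.induce (gball G o r) G).IsTree)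
    {v : V} (hrv : G.Reachable o v) (h1 : 1 ≤ G.dist o v) (hr2 : G.dist o v ≤ r) :
    ∃ pa : V, G.Adj v pa ∧ G.Reachable o pa ∧ G.dist o pa + 1 = G.dist o v ∧
      ∀ u, G.Adj v u → u ≠ pa → G.dist o u = G.dist o v + 1 := by
  obtain ⟨pa, ⟨hadj, hrpa, hdpa⟩, huniq⟩ := parent_spec hT hrv h1 hr2
  refine ⟨pa, hadj, hrpa, hdpa, ?_⟩
  intro u hu hne
  have hru : G.Reachable o u := hrv.trans hu.reachable
  have hub : G.dist o u ≤ G.dist o v + 1 := dist_adj_le hrv hu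
  have hlb : G.dist o v ≤ G.dist o u + 1 := dist_adj_le hru hu.symm
  have hne2 : G.dist o u ≠ G.dist o v := fun h => no_same_level hT hu hrv hru h hr2
  have hne3 : ¬ G.dist o u < G.dist o v := fun h => hne (huniq u hu h)
  omega

lemma exists_level (hT : (SimpleGraph.induce (gball G o r) G).IsTree)
    (hdeg : ∀ v, G.Reachable o v → G.dist o v ≤ r - 1 → G.degree v = d)
    (hd2 : 2 ≤ d) (hr1 : 1 ≤ r) :
    ∀ k, k ≤ r → ∃ v, G.Reachable o v ∧ G.dist o v = k := by
  intro k
  induction k with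
  | zero => exact fun _ => ⟨o, Reachable.refl o, SimpleGraph.dist_self⟩
  | succ k ih =>
    intro hkr
    obtain ⟨v, hrv, hdv⟩ := ih (by omega)
    have hdegv : G.degree v = d := hdeg v hrv (by omega)
    rcases Nat.eq_zero_or_pos k with hk0 | hk1
    · subst hk0
      have hvo : v = o := (hrv.symm.dist_eq_zero_iff).mp (by
        rwa [SimpleGraph.dist_comm] at hdv)
      subst hvo
      have hne : (G.neighborFinset v).Nonempty := by
        rw [← Finset.card_pos, G.card_neighborFinset_eq_degree, hdegv]; omega
      obtain ⟨u, hu⟩ := hne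
      rw [SimpleGraph.mem_neighborFinset] at hu
      have hru : G.Reachable v u := hu.reachable
      refine ⟨u, hru, le_antisymm ?_ (hru.pos_dist_of_ne hu.ne)⟩
      have := dist_adj_le (Reachable.refl v) hu
      simpa [SimpleGraph.dist_self] using this
    · obtain ⟨pa, hadj, hrpa, hdpa, hclass⟩ := levels hT hrv (by omega) (by omega)
      have hcard : 1 < (G.neighborFinset v).card := by
        rw [G.card_neighborFinset_eq_degree, hdegv]; omega
      obtain ⟨u, hu, hune⟩ := Finset.exists_mem_ne hcard pa
      rw [SimpleGraph.mem_neighborFinset] at hu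
      exact ⟨u, hrv.trans hu.reachable, by rw [hclass u hu hune, hdv]⟩

lemma neighbor_sum (hT : (SimpleGraph.induce (gball G o r) G).IsTree)
    (hdeg : ∀ v, G.Reachable o v → G.dist o v ≤ r - 1 → G.degree v = d)
    {v : V} (hrv : G.Reachable o v) {k : ℕ} (hk : G.dist o v = k + 1) (hkr : k + 2 ≤ r)
    (F : ℕ → ℂ) (f : V → ℂ) (hf : ∀ u, G.Reachable o u → f u = F (G.dist o u))
    (hd1 : 1 ≤ d) :
    ∑ u ∈ G.neighborFinset v, f u = F k + ((d : ℂ) - 1) * F (k + 2) := by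
  obtain ⟨pa, hadj, hrpa, hdpa, hclass⟩ := levels hT hrv (by omega) (by omega)
  have hpamem : pa ∈ G.neighborFinset v := (SimpleGraph.mem_neighborFinset _ _ _).mpr hadj
  rw [← Finset.add_sum_erase _ f hpamem]
  have hfpa : f pa = F k := by rw [hf pa hrpa]; congr 1; omega
  have hrest : ∀ u ∈ (G.neighborFinset v).erase pa, f u = F (k + 2) := by
    intro u hu
    obtain ⟨hune, humem⟩ := Finset.mem_erase.mp hu
    rw [SimpleGraph.mem_neighborFinset] at humem
    rw [hf u (hrv.trans humem.reachable), hclass u humem hune, hk]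
  rw [Finset.sum_congr rfl hrest, Finset.sum_const, Finset.card_erase_of_mem hpamem,
    G.card_neighborFinset_eq_degree, hdeg v hrv (by omega), hfpa]
  have hcast : ((d - 1 : ℕ) : ℂ) = (d : ℂ) - 1 := by
    push_cast [Nat.cast_sub hd1]; ring
  rw [nsmul_eq_mul, hcast]

lemma neighbor_sum_o
    (hdeg : ∀ v, G.Reachable o v → G.dist o v ≤ r - 1 → G.degree v = d)
    (F : ℕ → ℂ) (f : V → ℂ) (hf : ∀ u, G.Reachable o u → f u = F (G.dist o u)) :
    ∑ u ∈ G.neighborFinset o, f u = (d : ℂ) * F 1 := by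
  have hrest : ∀ u ∈ G.neighborFinset o, f u = F 1 := by
    intro u hu
    rw [SimpleGraph.mem_neighborFinset] at hu
    have hru : G.Reachable o u := hu.reachable
    rw [hf u hru]
    congr 1
    refine le_antisymm ?_ (hru.pos_dist_of_ne hu.ne)
    have := dist_adj_le (Reachable.refl o) hu
    simpa [SimpleGraph.dist_self] using this
  rw [Finset.sum_congr rfl hrest, Finset.sum_const, G.card_neighborFinset_eq_degree,
    hdeg o (Reachable.refl o) (by simp [SimpleGraph.dist_self]), nsmul_eq_mul]

end Graph

lemma roots_exist (d : ℕ) (hd : 65 ≤ d) (α : ℂ) (hα : ‖α‖ = 1) :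
    ∃ wp wm : ℂ, ((d:ℂ)-1)*wp^2 - α*d*wp + 1 = 0 ∧ ((d:ℂ)-1)*wm^2 - α*d*wm + 1 = 0 ∧
      wp * wm = 1/((d:ℂ)-1) ∧
      1 ≤ ‖wp‖ ∧ ‖wp‖ ≤ 1 + 2/((d:ℝ)-1) ∧ ‖wm‖ ≤ ‖wp‖ := by
  have hdr : (65:ℝ) ≤ (d:ℝ) := by exact_mod_cast hd
  set qr : ℝ := (d:ℝ) - 1 with hqr_def
  have hqr : (64:ℝ) ≤ qr := by rw [hqr_def]; linarith
  have hqc_eq : ((d:ℂ) - 1) = ((qr : ℝ) : ℂ) := by rw [hqr_def]; push_cast; ring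
  have hqc_norm : ‖((d:ℂ) - 1)‖ = qr := by
    rw [hqc_eq, Complex.norm_real, Real.norm_eq_abs, abs_of_nonneg (by linarith)]
  have hqc0 : ((d:ℂ) - 1) ≠ 0 := by
    intro h; rw [h] at hqc_norm; simp at hqc_norm; linarith
  obtain ⟨s, hs⟩ := IsAlgClosed.exists_pow_nat_eq (k := ℂ) ((α*d)^2 - 4*((d:ℂ)-1)) zero_lt_two
  set w1 : ℂ := (α*d + s)/(2*((d:ℂ)-1)) with hw1_def
  set w2 : ℂ := (α*d - s)/(2*((d:ℂ)-1)) with hw2_def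
  have hroot1 : ((d:ℂ)-1)*w1^2 - α*d*w1 + 1 = 0 := by
    rw [hw1_def]; field_simp; linear_combination hs
  have hroot2 : ((d:ℂ)-1)*w2^2 - α*d*w2 + 1 = 0 := by
    rw [hw2_def]; field_simp; linear_combination hs
  have hprod : w1 * w2 = 1/((d:ℂ)-1) := by
    rw [hw1_def, hw2_def]; field_simp; linear_combination (-1:ℂ) * hs
  have hsum : w1 + w2 = α*d/((d:ℂ)-1) := by rw [hw1_def, hw2_def]; field_simp; ring
  have hs_norm : ‖s‖ ≤ (d:ℝ) + 2*qr/(d:ℝ) := by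
    have h1 : ‖s‖^2 = ‖(α*d)^2 - 4*((d:ℂ)-1)‖ := by rw [← norm_pow, hs]
    have h2 : ‖(α*d)^2 - 4*((d:ℂ)-1)‖ ≤ (d:ℝ)^2 + 4*qr := by
      calc ‖(α*d)^2 - 4*((d:ℂ)-1)‖ ≤ ‖(α*d)^2‖ + ‖(4:ℂ)*((d:ℂ)-1)‖ := by
            exact norm_sub_le _ _
      _ = (d:ℝ)^2 + 4*qr := by
          rw [norm_pow, norm_mul, norm_mul, hα, hqc_norm]
          simp
    have h3 : ‖s‖^2 ≤ (d:ℝ)^2 + 4*qr := h1 ▸ h2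
    set t : ℝ := 2*qr/(d:ℝ) with ht_def
    have hd0 : (0:ℝ) < (d:ℝ) := by linarith
    have ht : (d:ℝ)*t = 2*qr := by rw [ht_def]; field_simp
    have ht0 : 0 ≤ t := by rw [ht_def]; positivity
    have hB2 : ‖s‖^2 ≤ ((d:ℝ) + t)^2 := by nlinarith [sq_nonneg t]
    calc ‖s‖ = Real.sqrt (‖s‖^2) := by rw [Real.sqrt_sq (norm_nonneg s)]
    _ ≤ Real.sqrt (((d:ℝ) + t)^2) := Real.sqrt_le_sqrt hB2
    _ = (d:ℝ) + t := Real.sqrt_sq (by linarith)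
  have hd0 : (0:ℝ) < (d:ℝ) := by linarith
  have hub : ∀ z : ℂ, ‖z‖ ≤ (d:ℝ) + 2*qr/(d:ℝ) → ‖(α*d + z)/(2*((d:ℂ)-1))‖ ≤ 1 + 2/qr := by
    intro z hz
    rw [norm_div, norm_mul, hqc_norm]
    have hnum : ‖α*(d:ℂ) + z‖ ≤ (d:ℝ) + ((d:ℝ) + 2*qr/(d:ℝ)) := by
      calc ‖α*(d:ℂ) + z‖ ≤ ‖α*(d:ℂ)‖ + ‖z‖ := norm_add_le _ _
      _ ≤ (d:ℝ) + ((d:ℝ) + 2*qr/(d:ℝ)) := by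
          rw [norm_mul, hα, Complex.norm_natCast]; linarith
    have hden : ‖(2:ℂ)‖ * qr = 2*qr := by norm_num
    rw [hden, div_le_iff₀ (by linarith)]
    have key : (d:ℝ) + ((d:ℝ) + 2*qr/(d:ℝ)) ≤ (1 + 2/qr)*(2*qr) := by
      have h5 : 2*qr/(d:ℝ) ≤ 2 := by
        rw [div_le_iff₀ hd0, hqr_def]; linarith
      have h6 : (1 + 2/qr)*(2*qr) = 2*qr + 4 := by field_simp; ring
      rw [h6, hqr_def]; linarith
    linarith
  have hub1 : ‖w1‖ ≤ 1 + 2/qr := hub s hs_norm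
  have hub2 : ‖w2‖ ≤ 1 + 2/qr := by
    have hw2' : w2 = (α*d + (-s))/(2*((d:ℂ)-1)) := by rw [hw2_def]; ring_nf
    rw [hw2']; exact hub (-s) (by simpa using hs_norm)
  have hsum_norm : (d:ℝ)/qr ≤ ‖w1‖ + ‖w2‖ := by
    calc (d:ℝ)/qr = ‖w1 + w2‖ := by
          rw [hsum, norm_div, norm_mul, hα, hqc_norm, Complex.norm_natCast, one_mul]
    _ ≤ ‖w1‖ + ‖w2‖ := norm_add_le _ _
  have hprod_norm : ‖w1‖ * ‖w2‖ = 1/qr := by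
    rw [← norm_mul, hprod, norm_div, hqc_norm, norm_one]
  have hbig : ∀ a b : ℂ, ‖b‖ ≤ ‖a‖ → (d:ℝ)/qr ≤ ‖a‖ + ‖b‖ → ‖a‖*‖b‖ = 1/qr → 1 ≤ ‖a‖ := by
    intro a b hab hsab hpab
    by_contra hlt
    push_neg at hlt
    have hb1 : ‖b‖ < 1 := lt_of_le_of_lt hab hlt
    have h1 : (0:ℝ) < 1 - ‖a‖ := by linarith
    have h2 : (0:ℝ) < 1 - ‖b‖ := by linarith
    have hdq : (d:ℝ)/qr = 1 + 1/qr := by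
      rw [hqr_def, eq_comm, one_add_div (by linarith : (0:ℝ) < (d:ℝ)-1).ne', sub_add_cancel]
    have hsab' : 1 + 1/qr ≤ ‖a‖ + ‖b‖ := by rw [← hdq]; exact hsab
    nlinarith [mul_pos h1 h2]
  rcases le_total ‖w2‖ ‖w1‖ with hc | hc
  · exact ⟨w1, w2, hroot1, hroot2, hprod, hbig w1 w2 hc hsum_norm hprod_norm, hub1, hc⟩
  · refine ⟨w2, w1, hroot2, hroot1, by rw [mul_comm]; exact hprod, ?_, hub2, hc⟩
    exact hbig w2 w1 hc (by linarith) (by rw [mul_comm]; exact hprod_norm)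

/-- Lemma A.12 (instability of the naive self-consistent equation):
`‖(α − S)⁻¹‖_{∞→∞} ≥ c·min(r/log r, d)`, where `‖·‖_{∞→∞}` is the maximum absolute
row sum, expressed below via the supremum over rows. -/
theorem instability :
    ∃ c : ℝ, 0 < c ∧
    ∀ (V : Type) (_ : Fintype V) (_ : DecidableEq V)
      (G : SimpleGraph V) (_ : DecidableRel G.Adj) (o : V) (d r : ℕ),
      1 ≤ d → 2 ≤ r →
      -- the ball of radius r around o induces a tree
      (SimpleGraph.induce (gball G o r) G).IsTree →
      -- every vertex at distance at most r − 1 from o has degree exactly d in G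
      (∀ v, G.Reachable o v → G.dist o v ≤ r - 1 → G.degree v = d) →
      ∀ α : ℂ, ‖α‖ = 1 →
      IsUnit (α • (1 : Matrix V V ℂ) - (d : ℂ)⁻¹ • G.adjMatrix ℂ).det →
      c * min ((r : ℝ) / Real.log r) (d : ℝ) ≤
        ⨆ i : V, ∑ j : V, ‖(α • (1 : Matrix V V ℂ) - (d : ℂ)⁻¹ • G.adjMatrix ℂ)⁻¹ i j‖ := by
  classical
  refine ⟨1/200, by norm_num, ?_⟩
  intro V instF instD G instA o d r hd1 hr2 hT hdeg α hα hdet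
  set M : Matrix V V ℂ := α • (1 : Matrix V V ℂ) - (d : ℂ)⁻¹ • G.adjMatrix ℂ with hM_def
  set R : Matrix V V ℂ := M⁻¹ with hR_def
  have hRM : R * M = 1 := Matrix.nonsing_inv_mul M hdet
  have hbdd : BddAbove (Set.range fun i : V => ∑ j : V, ‖R i j‖) :=
    Set.Finite.bddAbove (Set.finite_range _)
  have hdr1 : (1:ℝ) ≤ (d:ℝ) := by exact_mod_cast hd1
  -- the trivial lower bound 1 ≤ sup-norm
  have htriv : (1:ℝ) ≤ ⨆ i : V, ∑ j : V, ‖R i j‖ := by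
    have h1 : ∑ j, R o j * M j o = 1 := by
      have h := congrFun (congrFun hRM o) o
      rwa [Matrix.mul_apply, Matrix.one_apply_eq] at h
    have hMle : ∀ j, ‖M j o‖ ≤ 1 := by
      intro j
      rw [hM_def]
      simp only [Matrix.sub_apply, Matrix.smul_apply, Matrix.one_apply,
        SimpleGraph.adjMatrix_apply, smul_eq_mul]
      by_cases hj : j = o
      · subst hj
        rw [if_pos rfl, if_neg (G.irrefl)]
        simpa [hα] using le_refl (1:ℝ)
      · rw [if_neg hj]
        by_cases ha : G.Adj j o
        · rw [if_pos ha]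
          simp only [mul_zero, mul_one, zero_sub, norm_neg]
          rw [norm_inv, Complex.norm_natCast]
          rw [inv_le_one_iff₀]
          right; exact hdr1
        · rw [if_neg ha]
          simp
    calc (1:ℝ) = ‖∑ j, R o j * M j o‖ := by rw [h1]; simp
    _ ≤ ∑ j, ‖R o j * M j o‖ := norm_sum_le _ _
    _ ≤ ∑ j, ‖R o j‖ := Finset.sum_le_sum (fun j _ => by
        rw [norm_mul]; exact mul_le_of_le_one_right (norm_nonneg _) (hMle j))
    _ ≤ ⨆ i, ∑ j, ‖R i j‖ := le_ciSup hbdd o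
  by_cases hsmall : min r d ≤ 64
  · -- trivial case
    have hminle : min ((r:ℝ)/Real.log r) (d:ℝ) ≤ 64 := by
      rcases le_or_gt r d with hmin | hmin
      · -- r ≤ d, so r ≤ 64
        have hrle : r ≤ 64 := by omega
        rcases Nat.lt_or_ge r 3 with hr3 | hr3
        · -- r = 2
          have : r = 2 := by omega
          subst this
          have hlog2 : (0.6931471803:ℝ) < Real.log 2 := Real.log_two_gt_d9
          have : (2:ℝ)/Real.log 2 ≤ 64 := by
            rw [div_le_iff₀ (by linarith)]
            linarith
          calc min ((2:ℝ)/Real.log 2) (d:ℝ) ≤ (2:ℝ)/Real.log 2 := min_le_left _ _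
          _ ≤ 64 := this
        · have hrr : (3:ℝ) ≤ (r:ℝ) := by exact_mod_cast hr3
          have hlogr : (1:ℝ) ≤ Real.log r := by
            rw [Real.le_log_iff_exp_le (by linarith)]
            have := Real.exp_one_lt_d9
            linarith
          have hdiv : (r:ℝ)/Real.log r ≤ (r:ℝ) := div_le_self (by linarith) hlogr
          have hrle' : (r:ℝ) ≤ 64 := by exact_mod_cast hrle
          calc min ((r:ℝ)/Real.log r) (d:ℝ) ≤ (r:ℝ)/Real.log r := min_le_left _ _
          _ ≤ 64 := by linarith
      · -- d < r, so d ≤ 64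
        have hdle : d ≤ 64 := by omega
        have : (d:ℝ) ≤ 64 := by exact_mod_cast hdle
        calc min ((r:ℝ)/Real.log r) (d:ℝ) ≤ (d:ℝ) := min_le_right _ _
        _ ≤ 64 := this
    calc (1/200:ℝ) * min ((r:ℝ)/Real.log r) (d:ℝ) ≤ (1/200) * 64 := by
          apply mul_le_mul_of_nonneg_left hminle (by norm_num)
    _ ≤ 1 := by norm_num
    _ ≤ _ := htriv
  · -- main case
    push_neg at hsmall
    have hr65 : 65 ≤ r := by omega
    have hd65 : 65 ≤ d := by omega
    have hd2 : 2 ≤ d := by omega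
    have hdrr : (65:ℝ) ≤ (d:ℝ) := by exact_mod_cast hd65
    have hqr64 : (64:ℝ) ≤ (d:ℝ) - 1 := by linarith
    have hdC : ((d:ℕ):ℂ) ≠ 0 := Nat.cast_ne_zero.mpr (by omega)
    have hdinv : (d:ℂ)⁻¹ * (d:ℂ) = 1 := inv_mul_cancel₀ hdC
    have hqc_norm : ‖((d:ℂ) - 1)‖ = (d:ℝ) - 1 := by
      have h1 : ((d:ℂ) - 1) = (((d:ℝ) - 1 : ℝ) : ℂ) := by push_cast; ring
      rw [h1, Complex.norm_real, Real.norm_eq_abs, abs_of_nonneg (by linarith)]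
    -- the cutoff length
    set L : ℕ := min r (d / 3) with hL_def
    have hL21 : 21 ≤ L := le_min (by omega) (by omega)
    have hLr : L ≤ r := min_le_left _ _
    have hLd3 : 3 * L ≤ d := by
      have h := min_le_right r (d / 3)
      omega
    have hL0 : (0:ℝ) < (L:ℝ) := by exact_mod_cast (by omega : 0 < L)
    have hLC : ((L:ℕ):ℂ) ≠ 0 := Nat.cast_ne_zero.mpr (by omega)
    set k0 : ℕ := L / 2 with hk0_def
    have hk02 : 2 ≤ k0 := by omega
    -- the roots
    obtain ⟨wp, wm, hroot1, hroot2, hprod, hWlb, hWub, hmle⟩ := roots_exist d hd65 α hα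
    have hprod_norm : ‖wp‖ * ‖wm‖ = 1/((d:ℝ)-1) := by
      rw [← norm_mul, hprod, norm_div, norm_one, hqc_norm]
    have hm_ub : ‖wm‖ ≤ 1/((d:ℝ)-1) := by
      nlinarith [norm_nonneg wm, mul_le_mul_of_nonneg_right hWlb (norm_nonneg wm)]
    have hm_ub' : ‖wm‖ ≤ 1/64 := by
      have : (1:ℝ)/((d:ℝ)-1) ≤ 1/64 := by
        rw [div_le_div_iff₀ (by linarith) (by norm_num)]; linarith
      linarith
    have h2qr : 2/((d:ℝ)-1) ≤ 1/32 := by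
      rw [div_le_iff₀ (by linarith)]; linarith
    -- the radial sequence
    set u : ℕ → ℂ := fun k => (α - wm)*wp^k - (α - wp)*wm^k with hu_def
    have hu_app : ∀ k, u k = (α - wm)*wp^k - (α - wp)*wm^k := fun k => rfl
    have hu01 : u 1 = α * u 0 := by rw [hu_app, hu_app]; ring
    have hurec : ∀ m : ℕ, u m + ((d:ℂ)-1) * u (m+2) = α*(d:ℂ)*(u (m+1)) := by
      intro m
      rw [hu_app, hu_app, hu_app]
      linear_combination ((α - wm)*wp^m) * hroot1 - ((α - wp)*wm^m) * hroot2
    -- norm bounds on u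
    have hexp34 : Real.exp (3/4) ≤ 11/5 := by
      have h1 : Real.exp 1 < 2.7182818286 := Real.exp_one_lt_d9
      have h2 : Real.exp (3/4) ^ (4:ℕ) = Real.exp 3 := by
        rw [← Real.exp_nat_mul]; norm_num
      have h3 : Real.exp 3 = Real.exp 1 ^ (3:ℕ) := by rw [← Real.exp_nat_mul]; norm_num
      by_contra hcon
      push_neg at hcon
      have h4 : (11/5:ℝ)^(4:ℕ) < Real.exp (3/4) ^ (4:ℕ) :=
        pow_lt_pow_left₀ hcon (by norm_num) (by norm_num)
      have h5 : Real.exp 1 ^ (3:ℕ) < (2.7182818286:ℝ)^(3:ℕ) :=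
        pow_lt_pow_left₀ h1 (le_of_lt (Real.exp_pos 1)) (by norm_num)
      rw [h2, h3] at h4
      norm_num at h4 h5
      linarith
    have hWpow : ∀ k, k ≤ L + 1 → ‖wp‖^k ≤ 11/5 := by
      intro k hk
      have hWexp : ‖wp‖ ≤ Real.exp (2/((d:ℝ)-1)) := by
        have h := Real.add_one_le_exp (2/((d:ℝ)-1))
        linarith
      have h1 : ‖wp‖^k ≤ Real.exp (2/((d:ℝ)-1)) ^ k :=
        pow_le_pow_left₀ (norm_nonneg _) hWexp k
      have h2 : Real.exp (2/((d:ℝ)-1)) ^ k = Real.exp (k * (2/((d:ℝ)-1))) := by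
        rw [← Real.exp_nat_mul]
      have h3 : (k:ℝ) * (2/((d:ℝ)-1)) ≤ 3/4 := by
        have hk' : (k:ℝ) ≤ (L:ℝ) + 1 := by exact_mod_cast hk
        have hL' : 3*(L:ℝ) ≤ (d:ℝ) := by exact_mod_cast hLd3
        rw [mul_div_assoc', div_le_iff₀ (by linarith)]
        nlinarith
      calc ‖wp‖^k ≤ Real.exp ((k:ℕ) * (2/((d:ℝ)-1))) := h2 ▸ h1
      _ ≤ Real.exp (3/4) := Real.exp_le_exp.mpr h3
      _ ≤ 11/5 := hexp34
    have ham : ‖α - wm‖ ≤ 1 + 1/((d:ℝ)-1) := by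
      have := norm_sub_le α wm; rw [hα] at this; linarith
    have hap : ‖α - wp‖ ≤ 2 + 2/((d:ℝ)-1) := by
      have := norm_sub_le α wp; rw [hα] at this; linarith
    have hm1 : ‖wm‖ ≤ 1 := by linarith
    have hu_ub : ∀ k, k ≤ L + 1 → ‖u k‖ ≤ 9/2 := by
      intro k hk
      have h1 : ‖u k‖ ≤ ‖α - wm‖ * ‖wp‖^k + ‖α - wp‖ * ‖wm‖^k := by
        rw [hu_app]
        refine le_trans (norm_sub_le _ _) ?_
        rw [norm_mul, norm_mul, norm_pow, norm_pow]
      have hmk : ‖wm‖^k ≤ 1 := pow_le_one₀ (norm_nonneg _) hm1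
      have hqd : (1:ℝ)/((d:ℝ)-1) ≤ 1/64 := by
        rw [div_le_div_iff₀ (by linarith) (by norm_num)]; linarith
      have e1 : ‖α - wm‖ * ‖wp‖^k ≤ (1 + 1/64)*(11/5) := by
        apply mul_le_mul (by linarith) (hWpow k hk) (by positivity) (by norm_num)
      have e2 : ‖α - wp‖ * ‖wm‖^k ≤ (2 + 1/32)*1 := by
        apply mul_le_mul (by linarith) hmk (by positivity) (by norm_num)
      have : ((1:ℝ) + 1/64)*(11/5) + (2 + 1/32)*1 ≤ 9/2 := by norm_num
      linarith
    have hu_lb : (9/10 : ℝ) ≤ ‖u k0‖ := by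
      have h1 : ‖(α - wm)*wp^k0‖ - ‖(α - wp)*wm^k0‖ ≤ ‖u k0‖ := by
        rw [hu_app]; exact norm_sub_norm_le _ _
      rw [norm_mul, norm_mul, norm_pow, norm_pow] at h1
      have h2 : 1 - 1/((d:ℝ)-1) ≤ ‖α - wm‖ := by
        have := norm_sub_norm_le α wm; rw [hα] at this; linarith
      have h3 : (1:ℝ) ≤ ‖wp‖^k0 := one_le_pow₀ hWlb
      have h4 : ‖wm‖^k0 ≤ (1/64)^2 := by
        calc ‖wm‖^k0 ≤ ‖wm‖^2 :=
              pow_le_pow_of_le_one (norm_nonneg _) hm1 (by omega)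
        _ ≤ (1/64)^2 := by
            apply pow_le_pow_left₀ (norm_nonneg _) hm_ub'
      have h5 : (1:ℝ)/((d:ℝ)-1) ≤ 1/64 := by
        rw [div_le_div_iff₀ (by linarith) (by norm_num)]; linarith
      have e1 : (1 - 1/64) * 1 ≤ ‖α - wm‖ * ‖wp‖^k0 := by
        apply mul_le_mul (by linarith) h3 (by norm_num) (norm_nonneg _)
      have e2 : ‖α - wp‖ * ‖wm‖^k0 ≤ (2 + 1/32)*((1/64)^2) := by
        apply mul_le_mul (by linarith) h4 (by positivity) (by norm_num)
      have : ((1:ℝ) - 1/64) * 1 - (2 + 1/32)*((1/64)^2) ≥ 9/10 := by norm_num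
      linarith
    -- the test vector
    set t : ℕ → ℂ := fun j => ((L - j : ℕ) : ℂ) / (L : ℂ) with ht_def
    have ht_app : ∀ j, t j = ((L - j : ℕ) : ℂ) / (L : ℂ) := fun j => rfl
    set F : ℕ → ℂ := fun j => t j * u j with hF_def
    have hF_app : ∀ j, F j = t j * u j := fun j => rfl
    set f : V → ℂ := fun v => if G.Reachable o v then F (G.dist o v) else 0 with hf_def
    have hf : ∀ v, G.Reachable o v → f v = F (G.dist o v) := fun v hv => if_pos hv
    set y : V → ℂ := M.mulVec f with hy_def
    have hy_expand : ∀ v, y v = α * f v - (d:ℂ)⁻¹ * ∑ x ∈ G.neighborFinset v, f x := by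
      intro v
      rw [hy_def, hM_def, Matrix.sub_mulVec, Matrix.smul_mulVec,
        Matrix.smul_mulVec, Pi.sub_apply, Pi.smul_apply, Pi.smul_apply,
        Matrix.one_mulVec, SimpleGraph.adjMatrix_mulVec_apply, smul_eq_mul, smul_eq_mul]
    -- the residual bound
    have hy : ∀ v, ‖y v‖ ≤ (9/2)/(L:ℝ) := by
      intro v
      by_cases hrv : G.Reachable o v
      · rcases Nat.lt_or_ge (G.dist o v) 1 with hk0' | hk1
        · -- v = o
          have hvo : o = v := (hrv.dist_eq_zero_iff).mp (by omega)
          subst hvo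
          rw [hy_expand o, neighbor_sum_o hdeg F f hf, hf o (Reachable.refl o),
            SimpleGraph.dist_self]
          have ht0 : t 0 = 1 := by
            rw [ht_app]; simp only [Nat.sub_zero]; exact div_self hLC
          have ht1 : t 1 = 1 - 1/(L:ℂ) := by
            rw [ht_app]
            have hc : ((L - 1:ℕ):ℂ) = (L:ℂ) - 1 := by
              have h1 : (1:ℕ) ≤ L := by omega
              push_cast [Nat.cast_sub h1]; ring
            rw [hc, sub_div, div_self hLC]
          have hval : α * F 0 - (d:ℂ)⁻¹ * ((d:ℂ) * F 1) = α * u 0 * (1/(L:ℂ)) := by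
            rw [hF_app, hF_app, ht0, ht1, hu01]
            linear_combination (-(1 - 1/(L:ℂ)) * α * u 0) * hdinv
          rw [hval, norm_mul, norm_mul, hα, one_mul]
          have hn1 : ‖(1:ℂ)/(L:ℂ)‖ = 1/(L:ℝ) := by
            rw [norm_div, norm_one, Complex.norm_natCast]
          rw [hn1, div_eq_mul_inv ((9:ℝ)/2), one_div]
          apply mul_le_mul_of_nonneg_right (hu_ub 0 (by omega)) (by positivity)
        · rcases Nat.lt_or_ge (G.dist o v) L with hkL | hkL
          · -- interior vertex
            obtain ⟨m, hm⟩ : ∃ m, G.dist o v = m + 1 := ⟨G.dist o v - 1, by omega⟩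
            have hm2L : m + 2 ≤ L := by omega
            have hsum := neighbor_sum hT hdeg hrv hm (by omega) F f hf hd1
            rw [hy_expand v, hsum, hf v hrv, hm]
            have hcast1 : ((L - m:ℕ):ℂ) = ((L - (m+1):ℕ):ℂ) + 1 := by
              have h1 : L - m = (L - (m+1)) + 1 := by omega
              rw [h1]; push_cast; ring
            have hcast2 : ((L - (m+2):ℕ):ℂ) = ((L - (m+1):ℕ):ℂ) - 1 := by
              have h1 : (L - (m+2)) + 1 = L - (m+1) := by omega
              rw [← h1]; push_cast; ring
            have htm : t m = t (m+1) + 1/(L:ℂ) := by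
              rw [ht_app, ht_app, hcast1, add_div]
            have htp : t (m+2) = t (m+1) - 1/(L:ℂ) := by
              rw [ht_app, ht_app, hcast2, sub_div]
            have hval : α * F (m+1) - (d:ℂ)⁻¹ * (F m + ((d:ℂ)-1) * F (m+2))
                = -((d:ℂ)⁻¹) * (1/(L:ℂ)) * (u m - ((d:ℂ)-1) * u (m+2)) := by
              rw [hF_app, hF_app, hF_app, htm, htp]
              linear_combination (-(d:ℂ)⁻¹ * t (m+1)) * (hurec m)
                + (-(t (m+1)) * α * u (m+1)) * hdinv
            rw [hval, norm_mul, norm_mul, norm_neg, norm_inv, Complex.norm_natCast]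
            have hn1 : ‖(1:ℂ)/(L:ℂ)‖ = 1/(L:ℝ) := by
              rw [norm_div, norm_one, Complex.norm_natCast]
            rw [hn1]
            have hbig : ‖u m - ((d:ℂ)-1) * u (m+2)‖ ≤ (9/2) * (d:ℝ) := by
              have b1 : ‖u m - ((d:ℂ)-1) * u (m+2)‖ ≤ ‖u m‖ + ((d:ℝ)-1) * ‖u (m+2)‖ := by
                refine le_trans (norm_sub_le _ _) ?_
                rw [norm_mul, hqc_norm]
              have b2 : ‖u m‖ ≤ 9/2 := hu_ub m (by omega)
              have b3 : ‖u (m+2)‖ ≤ 9/2 := hu_ub (m+2) (by omega)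
              have b4 : ((d:ℝ)-1) * ‖u (m+2)‖ ≤ ((d:ℝ)-1) * (9/2) :=
                mul_le_mul_of_nonneg_left b3 (by linarith)
              calc ‖u m - ((d:ℂ)-1) * u (m+2)‖ ≤ 9/2 + ((d:ℝ)-1)*(9/2) := by linarith
              _ = (9/2)*(d:ℝ) := by ring
            calc (d:ℝ)⁻¹ * (1/(L:ℝ)) * ‖u m - ((d:ℂ)-1) * u (m+2)‖
                ≤ (d:ℝ)⁻¹ * (1/(L:ℝ)) * ((9/2)*(d:ℝ)) := by
                  apply mul_le_mul_of_nonneg_left hbig (by positivity)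
            _ = (9/2)/(L:ℝ) := by
                field_simp
          · rcases Nat.eq_or_lt_of_le hkL with hkeq | hkgt
            · -- boundary vertex : dist = L
              have hkL' : G.dist o v = L := hkeq.symm
              have hfv : f v = 0 := by
                rw [hf v hrv, hkL', hF_app, ht_app]
                simp [Nat.sub_self]
              obtain ⟨pa, hadj, hrpa, hdpa, hclass⟩ := levels hT hrv (by omega) (by omega)
              have hsum : ∑ x ∈ G.neighborFinset v, f x = (1/(L:ℂ)) * u (L-1) := by
                have hpam : pa ∈ G.neighborFinset v :=
                  (SimpleGraph.mem_neighborFinset _ _ _).mpr hadj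
                rw [← Finset.add_sum_erase _ f hpam]
                have hz : ∀ x ∈ (G.neighborFinset v).erase pa, f x = 0 := by
                  intro x hx
                  obtain ⟨hne, hxm⟩ := Finset.mem_erase.mp hx
                  rw [SimpleGraph.mem_neighborFinset] at hxm
                  have hdx : G.dist o x = L + 1 := by rw [hclass x hxm hne, hkL']
                  rw [hf x (hrv.trans hxm.reachable), hdx, hF_app, ht_app]
                  simp [Nat.sub_eq_zero_of_le (by omega : L ≤ L+1)]
                rw [Finset.sum_eq_zero hz, add_zero]
                have hdpa' : G.dist o pa = L - 1 := by omega
                rw [hf pa hrpa, hdpa', hF_app, ht_app]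
                have h1 : L - (L-1) = 1 := by omega
                rw [h1]
                norm_num
              rw [hy_expand v, hfv, hsum, mul_zero, zero_sub, norm_neg, norm_mul,
                norm_mul, norm_inv, Complex.norm_natCast]
              have hn1 : ‖(1:ℂ)/(L:ℂ)‖ = 1/(L:ℝ) := by
                rw [norm_div, norm_one, Complex.norm_natCast]
              rw [hn1]
              have b2 : ‖u (L-1)‖ ≤ 9/2 := hu_ub (L-1) (by omega)
              have hdi : (d:ℝ)⁻¹ ≤ 1 := by
                rw [inv_le_one_iff₀]; right; linarith
              calc (d:ℝ)⁻¹ * (1/(L:ℝ) * ‖u (L-1)‖) ≤ 1 * (1/(L:ℝ) * (9/2)) := by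
                    apply mul_le_mul hdi ?_ (by positivity) (by norm_num)
                    apply mul_le_mul_of_nonneg_left b2 (by positivity)
              _ = (9/2)/(L:ℝ) := by ring
            · -- far vertex : dist > L
              have hfv : f v = 0 := by
                rw [hf v hrv, hF_app, ht_app]
                simp [Nat.sub_eq_zero_of_le (by omega : L ≤ G.dist o v)]
              have hsum : ∑ x ∈ G.neighborFinset v, f x = 0 := by
                apply Finset.sum_eq_zero
                intro x hx
                rw [SimpleGraph.mem_neighborFinset] at hx
                by_cases hrx : G.Reachable o x
                · have h1 : G.dist o v ≤ G.dist o x + 1 := dist_adj_le hrx hx.symm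
                  rw [hf x hrx, hF_app, ht_app]
                  simp [Nat.sub_eq_zero_of_le (by omega : L ≤ G.dist o x)]
                · exact if_neg hrx
              rw [hy_expand v, hfv, hsum, mul_zero, mul_zero, sub_zero, norm_zero]
              positivity
      · -- unreachable vertex
        have hfv : f v = 0 := if_neg hrv
        have hsum : ∑ x ∈ G.neighborFinset v, f x = 0 := by
          apply Finset.sum_eq_zero
          intro x hx
          rw [SimpleGraph.mem_neighborFinset] at hx
          exact if_neg (fun hrx => hrv (hrx.trans hx.symm.reachable))
        rw [hy_expand v, hfv, hsum, mul_zero, mul_zero, sub_zero, norm_zero]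
        positivity
    -- conclude
    obtain ⟨v0, hrv0, hdv0⟩ := exists_level hT hdeg hd2 (by omega) k0 (by omega)
    have hfv0 : (9/20 : ℝ) ≤ ‖f v0‖ := by
      rw [hf v0 hrv0, hdv0, hF_app, norm_mul]
      have htn : ‖t k0‖ = ((L - k0:ℕ):ℝ)/(L:ℝ) := by
        rw [ht_app, norm_div, Complex.norm_natCast, Complex.norm_natCast]
      rw [htn]
      have h2 : (1/2:ℝ) ≤ ((L - k0:ℕ):ℝ)/(L:ℝ) := by
        rw [le_div_iff₀ hL0]
        have h3 : L ≤ 2 * (L - k0) := by omega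
        have h4 : (L:ℝ) ≤ 2 * ((L - k0:ℕ):ℝ) := by exact_mod_cast h3
        linarith
      calc (9/20:ℝ) = (1/2)*(9/10) := by norm_num
      _ ≤ (((L - k0:ℕ):ℝ)/(L:ℝ)) * ‖u k0‖ :=
          mul_le_mul h2 hu_lb (by norm_num) (by positivity)
    have hRy : R.mulVec y = f := by
      rw [hy_def, Matrix.mulVec_mulVec, hRM, Matrix.one_mulVec]
    have hexp : f v0 = ∑ j, R v0 j * y j := by
      rw [← hRy]
      simp [Matrix.mulVec, dotProduct]
    have hsum_ub : ‖f v0‖ ≤ ((9/2)/(L:ℝ)) * ∑ j, ‖R v0 j‖ := by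
      rw [hexp]
      calc ‖∑ j, R v0 j * y j‖ ≤ ∑ j, ‖R v0 j * y j‖ := norm_sum_le _ _
      _ ≤ ∑ j, ‖R v0 j‖ * ((9/2)/(L:ℝ)) := Finset.sum_le_sum (fun j _ => by
          rw [norm_mul]; exact mul_le_mul_of_nonneg_left (hy j) (norm_nonneg _))
      _ = ((9/2)/(L:ℝ)) * ∑ j, ‖R v0 j‖ := by rw [← Finset.sum_mul]; ring
    have hS : (L:ℝ)/10 ≤ ∑ j, ‖R v0 j‖ := by
      have h := le_trans hfv0 hsum_ub
      have hid : ((9:ℝ)/2)/(L:ℝ)*(L:ℝ) = 9/2 := by field_simp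
      nlinarith [mul_le_mul_of_nonneg_right h (le_of_lt hL0)]
    have hfinal : (L:ℝ)/10 ≤ ⨆ i, ∑ j, ‖R i j‖ := le_trans hS (le_ciSup hbdd v0)
    have hlogr : (1:ℝ) ≤ Real.log r := by
      have hrr : (65:ℝ) ≤ (r:ℝ) := by exact_mod_cast hr65
      rw [Real.le_log_iff_exp_le (by linarith)]
      have := Real.exp_one_lt_d9
      linarith
    have hminr : min ((r:ℝ)/Real.log r) (d:ℝ) ≤ 5*(L:ℝ) := by
      have h5 : r ≤ 5 * L ∨ d ≤ 5 * L := by rw [hL_def]; omega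
      have h5' : min (r:ℝ) (d:ℝ) ≤ 5*(L:ℝ) := by
        rcases h5 with h5 | h5
        · have h6 : (r:ℝ) ≤ 5*(L:ℝ) := by exact_mod_cast h5
          exact le_trans (min_le_left _ _) h6
        · have h6 : (d:ℝ) ≤ 5*(L:ℝ) := by exact_mod_cast h5
          exact le_trans (min_le_right _ _) h6
      calc min ((r:ℝ)/Real.log r) (d:ℝ) ≤ min (r:ℝ) (d:ℝ) := by
            apply min_le_min ?_ le_rfl
            exact div_le_self (by positivity) hlogr
      _ ≤ 5*(L:ℝ) := h5'
    calc (1/200:ℝ) * min ((r:ℝ)/Real.log r) (d:ℝ) ≤ (1/200)*(5*(L:ℝ)) :=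
          mul_le_mul_of_nonneg_left hminr (by norm_num)
    _ ≤ (L:ℝ)/10 := by linarith
    _ ≤ _ := hfinal

end Instability
end
end

section
/- Let q ≥ 1 be a real number and let 𝕋 be a finite graph in which every vertex has degree at most q + 1. Then the adjacency matrix A^𝕋 of 𝕋 satisfies ‖A^𝕋‖ ≤ q + 1, where ‖·‖ is the operator norm induced by the Euclidean norm. If in addition 𝕋 is a tree, then ‖A^𝕋‖ ≤ 2·√q. -/
open scoped RealInnerProductSpace

noncomputable section

section Aux

lemma opnorm_le_of_inner {E : Type*} [NormedAddCommGroup E] [InnerProductSpace ℝ E]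
    (T : E →L[ℝ] E) (hsym : ∀ x y : E, ⟪T x, y⟫ = ⟪x, T y⟫) {C : ℝ} (hC : 0 ≤ C)
    (h : ∀ x : E, |⟪T x, x⟫| ≤ C * ‖x‖ ^ 2) : ‖T‖ ≤ C := by
  refine T.opNorm_le_bound hC fun x => ?_
  rcases eq_or_ne (T x) 0 with h0 | h0
  · rw [h0, norm_zero]; positivity
  have hx : x ≠ 0 := by rintro rfl; simp at h0
  have hxpos : (0:ℝ) < ‖x‖ := norm_pos_iff.2 hx
  have hTxpos : (0:ℝ) < ‖T x‖ := norm_pos_iff.2 h0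
  set y := (‖x‖ / ‖T x‖) • T x with hy
  have hny : ‖y‖ = ‖x‖ := by
    rw [hy, norm_smul, norm_div, Real.norm_eq_abs, Real.norm_eq_abs, abs_of_pos hxpos,
      abs_of_pos hTxpos, div_mul_cancel₀ _ hTxpos.ne']
  have hTyx : ⟪T y, x⟫ = ⟪T x, y⟫ := by rw [hsym, real_inner_comm]
  have expand : ⟪T (x + y), x + y⟫ - ⟪T (x - y), x - y⟫ = 2 * ⟪T x, y⟫ + 2 * ⟪T y, x⟫ := by
    simp only [map_add, map_sub, inner_add_left, inner_add_right, inner_sub_left,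
      inner_sub_right]
    ring
  have hβ : ⟪T x, y⟫ = ‖x‖ * ‖T x‖ := by
    rw [hy, real_inner_smul_right, real_inner_self_eq_norm_sq]
    field_simp
  have hb : 4 * (‖x‖ * ‖T x‖) ≤ C * ‖x + y‖ ^ 2 + C * ‖x - y‖ ^ 2 := by
    have h1 := (abs_le.1 (h (x + y))).2
    have h2 := (abs_le.1 (h (x - y))).1
    nlinarith [expand, hTyx, hβ]
  have hpar : ‖x + y‖ ^ 2 + ‖x - y‖ ^ 2 = 2 * (‖x‖ ^ 2 + ‖y‖ ^ 2) := by
    have := parallelogram_law_with_norm ℝ x y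
    nlinarith [this]
  have hsum : C * ‖x + y‖ ^ 2 + C * ‖x - y‖ ^ 2 = 4 * (C * ‖x‖ ^ 2) := by
    rw [← mul_add, hpar, hny]; ring
  rw [hsum] at hb
  nlinarith [hb, hxpos]

variable {V : Type} [Fintype V] [DecidableEq V] {G : SimpleGraph V} [DecidableRel G.Adj]

lemma nbr_sum_comm (G : SimpleGraph V) [DecidableRel G.Adj] (f : V → V → ℝ) :
    ∑ v, ∑ u ∈ G.neighborFinset v, f v u = ∑ v, ∑ u ∈ G.neighborFinset v, f u v := by
  have key : ∀ g : V → V → ℝ, ∑ v, ∑ u ∈ G.neighborFinset v, g v u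
      = ∑ v, ∑ u, if G.Adj v u then g v u else 0 := by
    intro g
    refine Finset.sum_congr rfl fun v _ => ?_
    rw [SimpleGraph.neighborFinset_def, ← Finset.sum_filter]
    congr 1
    ext u
    simp [SimpleGraph.mem_neighborSet]
  rw [key, key, Finset.sum_comm]
  refine Finset.sum_congr rfl fun v _ => Finset.sum_congr rfl fun u _ => ?_
  simp only [G.adj_comm]

lemma quad_le (G : SimpleGraph V) [DecidableRel G.Adj] (t : V → V → ℝ)
    (ht : ∀ ⦃v u⦄, G.Adj v u → 0 < t v u) (C : ℝ)
    (hrow : ∀ v, ∑ u ∈ G.neighborFinset v, (t v u + (t u v)⁻¹) ≤ 2 * C) (x : V → ℝ) :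
    |∑ v, (∑ u ∈ G.neighborFinset v, x u) * x v| ≤ C * ∑ v, x v ^ 2 := by
  have amgm : ∀ ⦃v u⦄, G.Adj v u → |x u * x v| ≤ (t v u * x v ^ 2 + (t v u)⁻¹ * x u ^ 2) / 2 := by
    intro v u h
    have htp := ht h
    have hinv : t v u * (t v u)⁻¹ = 1 := mul_inv_cancel₀ htp.ne'
    have h1 : 0 ≤ (t v u)⁻¹ * (t v u * x v - x u) ^ 2 :=
      mul_nonneg (inv_nonneg.2 htp.le) (sq_nonneg _)
    have h2 : 0 ≤ (t v u)⁻¹ * (t v u * x v + x u) ^ 2 :=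
      mul_nonneg (inv_nonneg.2 htp.le) (sq_nonneg _)
    rcases abs_cases (x u * x v) with ⟨he, _⟩ | ⟨he, _⟩ <;> rw [he] <;> nlinarith [h1, h2, hinv]
  calc |∑ v, (∑ u ∈ G.neighborFinset v, x u) * x v|
      ≤ ∑ v, ∑ u ∈ G.neighborFinset v, |x u * x v| := by
        refine (Finset.abs_sum_le_sum_abs _ _).trans ?_
        refine Finset.sum_le_sum fun v _ => ?_
        rw [Finset.sum_mul]
        exact Finset.abs_sum_le_sum_abs _ _
    _ ≤ ∑ v, ∑ u ∈ G.neighborFinset v, (t v u * x v ^ 2 + (t v u)⁻¹ * x u ^ 2) / 2 := by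
        refine Finset.sum_le_sum fun v _ => Finset.sum_le_sum fun u hu => ?_
        exact amgm ((G.mem_neighborFinset v u).1 hu)
    _ = (∑ v, ∑ u ∈ G.neighborFinset v, t v u * x v ^ 2 / 2)
        + ∑ v, ∑ u ∈ G.neighborFinset v, (t v u)⁻¹ * x u ^ 2 / 2 := by
        rw [← Finset.sum_add_distrib]
        refine Finset.sum_congr rfl fun v _ => ?_
        rw [← Finset.sum_add_distrib]
        exact Finset.sum_congr rfl fun u _ => by ring
    _ = (∑ v, ∑ u ∈ G.neighborFinset v, t v u * x v ^ 2 / 2)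
        + ∑ v, ∑ u ∈ G.neighborFinset v, (t u v)⁻¹ * x v ^ 2 / 2 := by
        rw [nbr_sum_comm G (fun v u => (t v u)⁻¹ * x u ^ 2 / 2)]
    _ = ∑ v, (∑ u ∈ G.neighborFinset v, (t v u + (t u v)⁻¹)) * (x v ^ 2 / 2) := by
        rw [← Finset.sum_add_distrib]
        refine Finset.sum_congr rfl fun v _ => ?_
        rw [Finset.sum_mul, ← Finset.sum_add_distrib]
        exact Finset.sum_congr rfl fun u _ => by ring
    _ ≤ ∑ v, (2 * C) * (x v ^ 2 / 2) := by
        refine Finset.sum_le_sum fun v _ => ?_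
        exact mul_le_mul_of_nonneg_right (hrow v) (by positivity)
    _ = C * ∑ v, x v ^ 2 := by
        rw [Finset.mul_sum]
        exact Finset.sum_congr rfl fun v _ => by ring

omit [Fintype V] [DecidableRel G.Adj] in
lemma tree_parent_unique (hG : G.IsTree) (r v u w : V)
    (hu : G.Adj v u) (hw : G.Adj v w)
    (hdu : G.dist r u ≤ G.dist r v) (hdw : G.dist r w ≤ G.dist r v) : u = w := by
  have hconn := hG.isConnected
  have build : ∀ (z : V) (hz : G.Adj v z), G.dist r z ≤ G.dist r v →
      ∃ p : G.Walk z r, (SimpleGraph.Walk.cons hz p).IsPath := by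
    intro z hz hdz
    obtain ⟨p, hp, hlen⟩ := hconn.exists_path_of_dist z r
    have hvp : v ∉ p.support := by
      intro hmem
      have h1 : G.dist z v ≤ (p.takeUntil v hmem).length := SimpleGraph.dist_le _
      have h2 : G.dist v r ≤ (p.dropUntil v hmem).length := SimpleGraph.dist_le _
      have h3 : (p.takeUntil v hmem).length + (p.dropUntil v hmem).length = p.length := by
        rw [← SimpleGraph.Walk.length_append, SimpleGraph.Walk.take_spec]
      have hzr : p.length = G.dist r z := by rw [hlen, SimpleGraph.dist_comm]
      have hvr : G.dist v r = G.dist r v := SimpleGraph.dist_comm ..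
      have hzero : G.dist z v = 0 := by omega
      have : z = v := ((hconn z v).dist_eq_zero_iff).1 hzero
      exact hz.ne' this
    exact ⟨p, hp.cons hvp⟩
  obtain ⟨p1, hp1⟩ := build u hu hdu
  obtain ⟨p2, hp2⟩ := build w hw hdw
  obtain ⟨P, -, hP⟩ := hG.existsUnique_path v r
  have e1 : SimpleGraph.Walk.cons hu p1 = P := hP _ hp1
  have e2 : SimpleGraph.Walk.cons hw p2 = P := hP _ hp2
  have := congrArg (fun q : G.Walk v r => q.getVert 1) (e1.trans e2.symm)
  simpa [SimpleGraph.Walk.getVert_cons] using this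

end Aux

/-- Lemma A.3: a graph with all degrees at most `q+1` has adjacency matrix of operator norm
(induced by the Euclidean norm) at most `q+1`; if moreover the graph is a tree, the norm is
at most `2√q`. -/
theorem adjacency_norm_bound (V : Type) [Fintype V] [DecidableEq V]
    (G : SimpleGraph V) [DecidableRel G.Adj] (q : ℝ) (hq : 1 ≤ q)
    (hdeg : ∀ v, (G.degree v : ℝ) ≤ q + 1) :
    ‖Matrix.toEuclideanCLM (𝕜 := ℝ) (G.adjMatrix ℝ)‖ ≤ q + 1 ∧
      (G.IsTree → ‖Matrix.toEuclideanCLM (𝕜 := ℝ) (G.adjMatrix ℝ)‖ ≤ 2 * Real.sqrt q) := by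
  set T := Matrix.toEuclideanCLM (𝕜 := ℝ) (G.adjMatrix ℝ) with hT
  -- self-adjointness
  have hA : IsSelfAdjoint (G.adjMatrix ℝ) := by
    rw [IsSelfAdjoint, Matrix.star_eq_conjTranspose]
    ext i j
    simp [Matrix.conjTranspose_apply, G.adj_comm]
  have hsa : IsSelfAdjoint T := by
    rw [hT, IsSelfAdjoint, ← map_star]
    exact congrArg _ hA
  have hsym : ∀ x y : EuclideanSpace ℝ V, ⟪T x, y⟫ = ⟪x, T y⟫ := fun x y =>
    hsa.isSymmetric x y
  -- quadratic form computation
  have hquad : ∀ x : EuclideanSpace ℝ V,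
      ⟪T x, x⟫ = ∑ v, (∑ u ∈ G.neighborFinset v, x u) * x v := by
    intro x
    rw [PiLp.inner_apply]
    refine Finset.sum_congr rfl fun v _ => ?_
    have hx : (T x) v = (Matrix.mulVec (G.adjMatrix ℝ) (WithLp.equiv _ _ x)) v := by
      have := congrFun (congrArg (fun z => (z : V → ℝ))
        (Matrix.ofLp_toEuclideanCLM (𝕜 := ℝ) (G.adjMatrix ℝ) x)) v
      exact this
    rw [hx]
    simp [SimpleGraph.adjMatrix_mulVec_apply]
    ring
  have hns : ∀ x : EuclideanSpace ℝ V, ‖x‖ ^ 2 = ∑ v, x v ^ 2 := by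
    intro x
    rw [← real_inner_self_eq_norm_sq, PiLp.inner_apply]
    exact Finset.sum_congr rfl fun v _ => by simp [sq]
  -- generic reduction
  have main : ∀ C : ℝ, 0 ≤ C → (∀ x : V → ℝ,
      |∑ v, (∑ u ∈ G.neighborFinset v, x u) * x v| ≤ C * ∑ v, x v ^ 2) → ‖T‖ ≤ C := by
    intro C hC hQ
    refine opnorm_le_of_inner T hsym hC fun x => ?_
    rw [hquad x, hns x]
    exact hQ (fun v => x v)
  constructor
  · -- first bound
    refine main (q + 1) (by linarith) fun x => ?_
    refine quad_le G (fun _ _ => 1) (fun _ _ _ => one_pos) (q + 1) (fun v => ?_) x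
    have : ∑ u ∈ G.neighborFinset v, ((1:ℝ) + (1:ℝ)⁻¹) = 2 * (G.degree v : ℝ) := by
      rw [Finset.sum_const, G.card_neighborFinset_eq_degree, nsmul_eq_mul]
      norm_num
      ring
    rw [this]
    have := hdeg v
    linarith
  · -- tree bound
    intro hGt
    have : Nonempty V := hGt.isConnected.nonempty
    obtain ⟨r⟩ := this
    set s := Real.sqrt q with hs
    have hs1 : 1 ≤ s := by
      rw [hs, show (1:ℝ) = Real.sqrt 1 by simp]
      exact Real.sqrt_le_sqrt hq
    have hs0 : 0 < s := lt_of_lt_of_le one_pos hs1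
    have hs2 : s ^ 2 = q := Real.sq_sqrt (by linarith)
    have hsinv : s⁻¹ ≤ s := by
      calc s⁻¹ ≤ 1 := inv_le_one_of_one_le₀ hs1
        _ ≤ s := hs1
    have hsinv0 : 0 < s⁻¹ := inv_pos.2 hs0
    have hmul : s * s⁻¹ = 1 := mul_inv_cancel₀ hs0.ne'
    set t : V → V → ℝ := fun v u => if G.dist r u ≤ G.dist r v then s else s⁻¹ with ht'
    have htpos : ∀ ⦃v u⦄, G.Adj v u → 0 < t v u := by
      intro v u _
      rw [ht']
      dsimp only
      split_ifs <;> assumption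
    refine main (2 * s) (by positivity) fun x => ?_
    refine quad_le G t htpos (2 * s) (fun v => ?_) x
    -- row sum bound
    set S := (G.neighborFinset v).filter (fun u => G.dist r u ≤ G.dist r v) with hS
    have hcard : S.card ≤ 1 := by
      refine Finset.card_le_one.2 fun a ha b hb => ?_
      rw [hS, Finset.mem_filter, G.mem_neighborFinset] at ha hb
      exact tree_parent_unique hGt r v a b ha.1 hb.1 ha.2 hb.2
    have hsplit := Finset.sum_filter_add_sum_filter_not (G.neighborFinset v)
      (fun u => G.dist r u ≤ G.dist r v) (fun u => t v u + (t u v)⁻¹)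
    have hbound1 : ∑ u ∈ S, (t v u + (t u v)⁻¹) ≤ (S.card : ℝ) * (2 * s) := by
      rw [← nsmul_eq_mul, ← Finset.sum_const]
      refine Finset.sum_le_sum fun u hu => ?_
      rw [hS, Finset.mem_filter] at hu
      rw [ht']
      dsimp only
      rw [if_pos hu.2]
      split_ifs
      · linarith
      · rw [inv_inv]
        linarith
    have hbound2 : ∑ u ∈ (G.neighborFinset v).filter (fun u => ¬ G.dist r u ≤ G.dist r v),
        (t v u + (t u v)⁻¹) =
        (((G.neighborFinset v).filter (fun u => ¬ G.dist r u ≤ G.dist r v)).card : ℝ)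
          * (2 * s⁻¹) := by
      rw [← nsmul_eq_mul, ← Finset.sum_const]
      refine Finset.sum_congr rfl fun u hu => ?_
      rw [Finset.mem_filter] at hu
      have h1 : ¬ G.dist r u ≤ G.dist r v := hu.2
      have h2 : G.dist r v ≤ G.dist r u := le_of_not_ge h1
      rw [ht']
      dsimp only
      rw [if_neg h1, if_pos h2]
      ring
    have hcards : S.card + ((G.neighborFinset v).filter
        (fun u => ¬ G.dist r u ≤ G.dist r v)).card = G.degree v := by
      rw [hS, Finset.card_filter_add_card_filter_not, G.card_neighborFinset_eq_degree]
    have hdegv := hdeg v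
    rw [← hsplit]
    interval_cases h : S.card
    · -- card 0
      have hcn : ((G.neighborFinset v).filter (fun u => ¬ G.dist r u ≤ G.dist r v)).card
          = G.degree v := by omega
      have hz : ∑ u ∈ S, (t v u + (t u v)⁻¹) = 0 := by
        have hse : S = ∅ := Finset.card_eq_zero.1 h
        rw [hse, Finset.sum_empty]
      rw [hz, hbound2, hcn]
      nlinarith [hdegv, hs2, hmul, hs1, hsinv0]
    · -- card 1
      have hd1 : 1 ≤ G.degree v := by omega
      have hcn : ((G.neighborFinset v).filter (fun u => ¬ G.dist r u ≤ G.dist r v)).card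
          = G.degree v - 1 := by omega
      have hc : (((G.neighborFinset v).filter (fun u => ¬ G.dist r u ≤ G.dist r v)).card : ℝ)
          = (G.degree v : ℝ) - 1 := by
        rw [hcn, Nat.cast_sub hd1, Nat.cast_one]
      have hb1 : ∑ u ∈ S, (t v u + (t u v)⁻¹) ≤ 2 * s := by simpa using hbound1
      rw [hbound2, hc]
      nlinarith [hdegv, hs2, hmul, hs1, hsinv0, hb1]
end
end

section
/- Let p, q ≥ 1 be integers and let 𝕋 be a finite tree with a distinguished root vertex o such that o has degree p and every vertex other than o has at most q children (i.e. degree at most q + 1). Then the adjacency matrix A^𝕋 of 𝕋 satisfies ‖A^𝕋‖ ≤ √q · Λ(max(p/q, 2)), where Λ(α) := α/√(α−1) and ‖·‖ is the operator norm induced by the Euclidean norm. -/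
noncomputable section

/-- `Λ(α) := α / √(α − 1)`. -/
def lamF (α : ℝ) : ℝ := α / Real.sqrt (α - 1)

open Finset


lemma schur_test {V : Type} [Fintype V] [DecidableEq V] (A : Matrix V V ℝ)
    (hsym : ∀ u v, A u v = A v u) (hnn : ∀ u v, 0 ≤ A u v) (g : V → ℝ) (hg : ∀ v, 0 < g v)
    (K : ℝ) (hK : 0 ≤ K) (hrow : ∀ v, ∑ u, A v u * (g u / g v) ≤ K) :
    ‖Matrix.toEuclideanCLM (𝕜 := ℝ) A‖ ≤ K := by
  apply ContinuousLinearMap.opNorm_le_bound _ hK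
  intro x
  have happ : ∀ v, (Matrix.toEuclideanCLM (𝕜 := ℝ) A x) v = ∑ u, A v u * x u := by
    intro v
    rfl
  have hx2 : ‖x‖ ^ 2 = ∑ u, x u ^ 2 := by
    rw [EuclideanSpace.norm_eq, Real.sq_sqrt (by positivity)]
    simp [sq_abs]
  have hts : ∀ v, 0 ≤ ∑ u, A v u * (g v / g u) * x u ^ 2 := fun v =>
    Finset.sum_nonneg fun u _ => by
      have := hg u; have := hg v; have := hnn v u; positivity
  have step1 : ∀ v, (∑ u, A v u * x u) ^ 2 ≤
      (∑ u, A v u * (g u / g v)) * (∑ u, A v u * (g v / g u) * x u ^ 2) := by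
    intro v
    have cs := Finset.sum_mul_sq_le_sq_mul_sq Finset.univ
      (fun u => Real.sqrt (A v u * (g u / g v)))
      (fun u => Real.sqrt (A v u * (g v / g u)) * x u)
    have h1 : ∀ u, Real.sqrt (A v u * (g u / g v)) * (Real.sqrt (A v u * (g v / g u)) * x u)
        = A v u * x u := by
      intro u
      have hnu := hnn v u
      have hgu := hg u; have hgv := hg v
      rw [← mul_assoc, ← Real.sqrt_mul (by positivity)]
      have : A v u * (g u / g v) * (A v u * (g v / g u)) = (A v u) ^ 2 := by
        field_simp
      rw [this, Real.sqrt_sq hnu]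
    have h2 : ∀ u, (Real.sqrt (A v u * (g u / g v))) ^ 2 = A v u * (g u / g v) := by
      intro u
      have hnu := hnn v u; have hgu := hg u; have hgv := hg v
      exact Real.sq_sqrt (by positivity)
    have h3 : ∀ u, (Real.sqrt (A v u * (g v / g u)) * x u) ^ 2
        = A v u * (g v / g u) * x u ^ 2 := by
      intro u
      have hnu := hnn v u; have hgu := hg u; have hgv := hg v
      rw [mul_pow, Real.sq_sqrt (by positivity)]
    calc (∑ u, A v u * x u) ^ 2
        = (∑ u, Real.sqrt (A v u * (g u / g v)) *
            (Real.sqrt (A v u * (g v / g u)) * x u)) ^ 2 := by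
          congr 1; exact Finset.sum_congr rfl fun u _ => (h1 u).symm
      _ ≤ (∑ u, (Real.sqrt (A v u * (g u / g v))) ^ 2) *
            (∑ u, (Real.sqrt (A v u * (g v / g u)) * x u) ^ 2) := cs
      _ = (∑ u, A v u * (g u / g v)) * (∑ u, A v u * (g v / g u) * x u ^ 2) := by
          rw [Finset.sum_congr rfl fun u _ => h2 u, Finset.sum_congr rfl fun u _ => h3 u]
  have key : ∑ v, (∑ u, A v u * x u) ^ 2 ≤ K ^ 2 * ∑ u, x u ^ 2 := by
    calc ∑ v, (∑ u, A v u * x u) ^ 2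
        ≤ ∑ v, K * (∑ u, A v u * (g v / g u) * x u ^ 2) :=
          Finset.sum_le_sum fun v _ => le_trans (step1 v)
            (mul_le_mul_of_nonneg_right (hrow v) (hts v))
      _ = K * ∑ u, (∑ v, A u v * (g v / g u)) * x u ^ 2 := by
          rw [← Finset.mul_sum]
          congr 1
          rw [Finset.sum_comm]
          exact Finset.sum_congr rfl fun u _ => by
            rw [Finset.sum_mul]
            exact Finset.sum_congr rfl fun v _ => by rw [hsym v u]
      _ ≤ K * ∑ u, K * x u ^ 2 := by
          apply mul_le_mul_of_nonneg_left _ hK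
          exact Finset.sum_le_sum fun u _ =>
            mul_le_mul_of_nonneg_right (hrow u) (sq_nonneg _)
      _ = K ^ 2 * ∑ u, x u ^ 2 := by rw [← Finset.mul_sum]; ring
  have hnorm2 : ‖Matrix.toEuclideanCLM (𝕜 := ℝ) A x‖ ^ 2 ≤ (K * ‖x‖) ^ 2 := by
    have : ‖Matrix.toEuclideanCLM (𝕜 := ℝ) A x‖ ^ 2
        = ∑ v, (∑ u, A v u * x u) ^ 2 := by
      rw [EuclideanSpace.norm_eq, Real.sq_sqrt (by positivity)]
      exact Finset.sum_congr rfl fun v _ => by rw [happ v, Real.norm_eq_abs, sq_abs]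
    rw [this, mul_pow, hx2]
    exact key
  have := Real.sqrt_le_sqrt hnorm2
  rwa [Real.sqrt_sq (norm_nonneg _), Real.sqrt_sq (by positivity)] at this


lemma mem_support_dist_le {V : Type} [DecidableEq V] {G : SimpleGraph V} {u v x : V} (w : G.Walk u v)
    (hx : x ∈ w.support) : G.dist u x ≤ w.length :=
  le_trans (SimpleGraph.dist_le (w.takeUntil x hx)) (SimpleGraph.Walk.length_takeUntil_le w hx)

lemma concat_isPath {V : Type} {G : SimpleGraph V} {u v w : V} {p : G.Walk u v}
    (hp : p.IsPath) (h : G.Adj v w) (hw : w ∉ p.support) : (p.concat h).IsPath := by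
  rw [← SimpleGraph.Walk.isPath_reverse_iff, SimpleGraph.Walk.reverse_concat]
  refine (SimpleGraph.Walk.cons_isPath_iff _ _).2 ⟨hp.reverse, ?_⟩
  simpa [SimpleGraph.Walk.support_reverse] using hw

lemma tree_adj_dist_ne {V : Type} [DecidableEq V] {G : SimpleGraph V} (htree : G.IsTree) (o : V) {u v : V}
    (h : G.Adj u v) : G.dist o u ≠ G.dist o v := by
  intro he
  obtain ⟨pu, hpu⟩ := (htree.isConnected.preconnected o u).exists_walk_length_eq_dist
  have hpuP : pu.IsPath := pu.isPath_of_length_eq_dist hpu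
  have hvnot : v ∉ pu.support := by
    intro hv
    have h1 : G.dist o v ≤ (pu.takeUntil v hv).length := SimpleGraph.dist_le _
    have h2 : (pu.takeUntil v hv).length + (pu.dropUntil v hv).length = pu.length := by
      rw [← SimpleGraph.Walk.length_append, SimpleGraph.Walk.take_spec]
    have h3 : (pu.dropUntil v hv).length = 0 := by omega
    have h4 : v = u := (pu.dropUntil v hv).eq_of_length_eq_zero h3
    exact h.ne h4.symm
  have hpath2 : (pu.concat h).IsPath := concat_isPath hpuP h hvnot
  obtain ⟨pv, hpv⟩ := (htree.isConnected.preconnected o v).exists_walk_length_eq_dist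
  have hpvP : pv.IsPath := pv.isPath_of_length_eq_dist hpv
  have heq := (htree.existsUnique_path o v).unique hpath2 hpvP
  have hl : (pu.concat h).length = pv.length := by rw [heq]
  rw [SimpleGraph.Walk.length_concat, hpu, hpv] at hl
  omega

lemma adj_dist_le {V : Type} {G : SimpleGraph V} (hconn : G.Connected) (o : V) {u v : V}
    (h : G.Adj u v) : G.dist o u ≤ G.dist o v + 1 := by
  have h1 : G.dist o u ≤ G.dist o v + G.dist v u := hconn.dist_triangle
  have h2 : G.dist v u ≤ 1 := by
    have := SimpleGraph.dist_le (SimpleGraph.Walk.cons h.symm SimpleGraph.Walk.nil)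
    simpa using this
  omega

lemma tree_adj_dist {V : Type} [DecidableEq V] {G : SimpleGraph V} (htree : G.IsTree) (o : V) {u v : V}
    (h : G.Adj u v) : G.dist o v = G.dist o u + 1 ∨ G.dist o u = G.dist o v + 1 := by
  have h1 := adj_dist_le htree.isConnected o h
  have h2 := adj_dist_le htree.isConnected o h.symm
  have h3 := tree_adj_dist_ne htree o h
  omega

lemma exists_parent {V : Type} {G : SimpleGraph V} (htree : G.IsTree) (o : V) {v : V}
    (hv : v ≠ o) : ∃ u, G.Adj v u ∧ G.dist o u + 1 = G.dist o v := by
  have hpos : 0 < G.dist o v := htree.isConnected.pos_dist_of_ne (Ne.symm hv)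
  obtain ⟨w, hw⟩ := (htree.isConnected.preconnected v o).exists_walk_length_eq_dist
  cases w with
  | nil => rw [SimpleGraph.dist_comm] at hw; simp at hw; exact absurd rfl hv
  | @cons _ u _ h t =>
    refine ⟨u, h, ?_⟩
    have h1 : G.dist o u ≤ t.length := by
      rw [SimpleGraph.dist_comm]; exact SimpleGraph.dist_le t
    have h2 : G.dist o v ≤ G.dist o u + 1 := adj_dist_le htree.isConnected o h
    have h3 : t.length + 1 = G.dist o v := by
      rw [SimpleGraph.dist_comm] at hw; simpa using hw
    omega

lemma parent_unique {V : Type} [DecidableEq V] {G : SimpleGraph V} (htree : G.IsTree) (o : V) {v u₁ u₂ : V}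
    (h1 : G.Adj v u₁) (hd1 : G.dist o u₁ + 1 = G.dist o v)
    (h2 : G.Adj v u₂) (hd2 : G.dist o u₂ + 1 = G.dist o v) : u₁ = u₂ := by
  obtain ⟨p₁, hp₁⟩ := (htree.isConnected.preconnected o u₁).exists_walk_length_eq_dist
  obtain ⟨p₂, hp₂⟩ := (htree.isConnected.preconnected o u₂).exists_walk_length_eq_dist
  have hnot₁ : v ∉ p₁.support := fun hv => by
    have := mem_support_dist_le p₁ hv; omega
  have hnot₂ : v ∉ p₂.support := fun hv => by
    have := mem_support_dist_le p₂ hv; omega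
  have hc₁ : (p₁.concat h1.symm).IsPath :=
    concat_isPath (p₁.isPath_of_length_eq_dist hp₁) h1.symm hnot₁
  have hc₂ : (p₂.concat h2.symm).IsPath :=
    concat_isPath (p₂.isPath_of_length_eq_dist hp₂) h2.symm hnot₂
  have heq := (htree.existsUnique_path o v).unique hc₁ hc₂
  obtain ⟨hv, -⟩ := SimpleGraph.Walk.concat_inj heq
  exact hv

/-- Lemma A.4: a finite tree whose root `o` has degree `p` and all other vertices have at most
`q` children (degree at most `q+1`) has adjacency matrix of operator norm (induced by the
Euclidean norm) at most `√q · Λ(max(p/q, 2))`. -/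
theorem rooted_tree_adjacency_norm_bound (V : Type) [Fintype V] [DecidableEq V]
    (G : SimpleGraph V) [DecidableRel G.Adj] (o : V) (p q : ℕ)
    (hp : 1 ≤ p) (hq : 1 ≤ q)
    (htree : G.IsTree) (hroot : G.degree o = p)
    (hdeg : ∀ v, v ≠ o → G.degree v ≤ q + 1) :
    ‖Matrix.toEuclideanCLM (𝕜 := ℝ) (G.adjMatrix ℝ)‖ ≤
      Real.sqrt q * lamF (max ((p : ℝ) / q) 2) := by
  classical
  have hq0 : (0:ℝ) < q := by exact_mod_cast hq
  have hp0 : (0:ℝ) < p := by exact_mod_cast hp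
  set α : ℝ := max ((p : ℝ) / q) 2 with hαdef
  have hα2 : (2:ℝ) ≤ α := le_max_right _ _
  have hαp : (p:ℝ)/q ≤ α := le_max_left _ _
  set s : ℝ := Real.sqrt (α - 1) with hsdef
  have hs2 : s ^ 2 = α - 1 := Real.sq_sqrt (by linarith)
  have hs1 : (1:ℝ) ≤ s := by
    nlinarith [Real.sqrt_nonneg (α - 1), hs2]
  have hs0 : (0:ℝ) < s := by linarith
  have hαs : α = s ^ 2 + 1 := by linarith
  set t : ℝ := Real.sqrt q with htdef
  have ht2 : t ^ 2 = q := Real.sq_sqrt (le_of_lt hq0)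
  have ht0 : (0:ℝ) < t := Real.sqrt_pos.mpr hq0
  set r : ℝ := 1 / (t * s) with hrdef
  have hr0 : 0 < r := by positivity
  have hKe : Real.sqrt (q:ℝ) * lamF α = t * α / s := by
    rw [lamF, ← htdef, ← hsdef]; ring
  have hpa : (p:ℝ) ≤ α * q := by
    rw [div_le_iff₀ hq0] at hαp; linarith
  -- bound (A): root row
  have hA : (p:ℝ) * r ≤ t * α / s := by
    rw [hrdef, mul_one_div, div_le_div_iff₀ (by positivity) hs0]
    have e1 : t * α * (t * s) = α * q * s := by rw [← ht2]; ring
    have e2 : (p:ℝ) * s ≤ α * q * s := mul_le_mul_of_nonneg_right hpa hs0.le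
    linarith
  -- bound (B): non-root rows
  have hB : 1/r + (q:ℝ) * r ≤ t * α / s := by
    have h1 : 1/r = t * s := by rw [hrdef, one_div_one_div]
    have h2 : (q:ℝ) * r = t / s := by
      rw [hrdef, mul_one_div, ← ht2]
      field_simp
    rw [h1, h2, hαs]
    have he : t * (s ^ 2 + 1) / s = t * s + t / s := by field_simp
    rw [he]
  rw [hKe]
  apply schur_test (G.adjMatrix ℝ) ?hsym ?hnn (fun v => r ^ G.dist o v) ?hg _ ?hK ?hrow
  case hsym =>
    intro u v
    simp only [SimpleGraph.adjMatrix_apply]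
    by_cases h : G.Adj u v
    · simp [h, h.symm]
    · have h' : ¬ G.Adj v u := fun hh => h hh.symm
      simp [h, h']
  case hnn =>
    intro u v
    simp only [SimpleGraph.adjMatrix_apply]
    split <;> norm_num
  case hg => intro v; positivity
  case hK => positivity
  case hrow =>
    intro v
    have hsum : ∑ u, (G.adjMatrix ℝ) v u * ((fun v => r ^ G.dist o v) u / (fun v => r ^ G.dist o v) v)
        = ∑ u ∈ G.neighborFinset v, r ^ G.dist o u / r ^ G.dist o v := by
      rw [SimpleGraph.neighborFinset_eq_filter, Finset.sum_filter]
      apply Finset.sum_congr rfl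
      intro u _
      simp only [SimpleGraph.adjMatrix_apply]
      split <;> simp
    rw [hsum]
    by_cases hvo : v = o
    · subst hvo
      have hterm : ∀ u ∈ G.neighborFinset v, r ^ G.dist v u / r ^ G.dist v v = r := by
        intro u hu
        rw [SimpleGraph.mem_neighborFinset] at hu
        have hdo : G.dist v v = 0 := SimpleGraph.dist_self
        have hdi := tree_adj_dist htree v hu
        have hdu : G.dist v u = 1 := by omega
        simp [hdu, hdo]
      rw [Finset.sum_congr rfl hterm, Finset.sum_const, nsmul_eq_mul]
      rw [SimpleGraph.card_neighborFinset_eq_degree, hroot]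
      exact hA
    · obtain ⟨u₀, hadj₀, hd₀⟩ := exists_parent htree o hvo
      have hu₀mem : u₀ ∈ G.neighborFinset v := by
        rw [SimpleGraph.mem_neighborFinset]; exact hadj₀
      rw [← Finset.add_sum_erase _ _ hu₀mem]
      have hparent : r ^ G.dist o u₀ / r ^ G.dist o v = 1 / r := by
        rw [← hd₀, pow_succ]
        rw [div_mul_eq_div_div, div_self (by positivity)]
      have hchild : ∀ u ∈ (G.neighborFinset v).erase u₀,
          r ^ G.dist o u / r ^ G.dist o v = r := by
        intro u hu
        obtain ⟨hne, hmem⟩ := Finset.mem_erase.1 hu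
        rw [SimpleGraph.mem_neighborFinset] at hmem
        rcases tree_adj_dist htree o hmem with hcase | hcase
        · have he : r ^ G.dist o u = r * r ^ G.dist o v := by rw [hcase, pow_succ]; ring
          rw [he, mul_div_assoc, div_self (by positivity), mul_one]
        · exact absurd (parent_unique htree o hmem hcase.symm hadj₀ hd₀) hne
      rw [Finset.sum_congr rfl hchild, Finset.sum_const, nsmul_eq_mul, hparent]
      have hcard : ((G.neighborFinset v).erase u₀).card ≤ q := by
        rw [Finset.card_erase_of_mem hu₀mem, SimpleGraph.card_neighborFinset_eq_degree]
        have := hdeg v hvo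
        omega
      have hcard' : (((G.neighborFinset v).erase u₀).card : ℝ) ≤ q := by exact_mod_cast hcard
      have := mul_le_mul_of_nonneg_right hcard' hr0.le
      linarith
end
end

section
/- Let D ∈ ℕ and suppose a star tuning fork of degree D is rooted in a finite graph ℍ. Then the adjacency matrix of ℍ has both √D and −√D as eigenvalues, with corresponding eigenvectors supported on the 2D + 2 vertices {h₁, h₂} ∪ R₁ ∪ R₂ of the two stars of the tuning fork. -/
noncomputable section

open Finset SimpleGraph

lemma stf_key (V : Type) [Fintype V] [DecidableEq V]
    (H : SimpleGraph V) [DecidableRel H.Adj] (D : ℕ)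
    (o h₁ h₂ : V) (R₁ R₂ : Finset V)
    (h₀₁ : o ≠ h₁) (h₀₂ : o ≠ h₂) (h₁₂ : h₁ ≠ h₂)
    (hR₁card : R₁.card = D) (hR₂card : R₂.card = D)
    (hRdisj : Disjoint R₁ R₂)
    (hRnot : ∀ v ∈ R₁ ∪ R₂, v ≠ o ∧ v ≠ h₁ ∧ v ≠ h₂)
    (hbase₁ : H.Adj h₁ o) (hbase₂ : H.Adj h₂ o)
    (hspoke₁ : ∀ v ∈ R₁, H.Adj h₁ v) (hspoke₂ : ∀ v ∈ R₂, H.Adj h₂ v)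
    (hdeg₁ : H.degree h₁ = D + 1) (hdeg₂ : H.degree h₂ = D + 1)
    (hleaf : ∀ v ∈ R₁ ∪ R₂, H.degree v = 1)
    (μ c s : ℝ) (hc : c ≠ 0)
    (hDs : (D : ℝ) * s = μ * c)
    (hcs : ∀ v ∈ R₁ ∪ R₂, c = μ * s) :
    ∃ w : V → ℝ, w ≠ 0 ∧ (H.adjMatrix ℝ).mulVec w = μ • w ∧
        ∀ v, w v ≠ 0 → v ∈ ({h₁, h₂} : Finset V) ∪ R₁ ∪ R₂ := by
  classical
  set w : V → ℝ := fun v =>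
    if v = h₁ then c else if v = h₂ then -c else
    if v ∈ R₁ then s else if v ∈ R₂ then -s else 0 with hw
  -- basic membership facts
  have hoR1 : o ∉ R₁ := fun h => (hRnot o (mem_union_left _ h)).1 rfl
  have hoR2 : o ∉ R₂ := fun h => (hRnot o (mem_union_right _ h)).1 rfl
  -- neighborhoods of the hubs
  have hN1 : H.neighborFinset h₁ = insert o R₁ := by
    refine (Finset.eq_of_subset_of_card_le ?_ ?_).symm
    · intro v hv
      rw [SimpleGraph.mem_neighborFinset]
      rcases Finset.mem_insert.mp hv with rfl | hv
      · exact hbase₁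
      · exact hspoke₁ v hv
    · rw [SimpleGraph.card_neighborFinset_eq_degree, hdeg₁,
        Finset.card_insert_of_notMem hoR1, hR₁card]
  have hN2 : H.neighborFinset h₂ = insert o R₂ := by
    refine (Finset.eq_of_subset_of_card_le ?_ ?_).symm
    · intro v hv
      rw [SimpleGraph.mem_neighborFinset]
      rcases Finset.mem_insert.mp hv with rfl | hv
      · exact hbase₂
      · exact hspoke₂ v hv
    · rw [SimpleGraph.card_neighborFinset_eq_degree, hdeg₂,
        Finset.card_insert_of_notMem hoR2, hR₂card]
  have hNl1 : ∀ r ∈ R₁, H.neighborFinset r = {h₁} := by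
    intro r hr
    refine (Finset.eq_of_subset_of_card_le ?_ ?_).symm
    · intro v hv
      rw [Finset.mem_singleton] at hv; subst hv
      rw [SimpleGraph.mem_neighborFinset]
      exact (hspoke₁ r hr).symm
    · rw [SimpleGraph.card_neighborFinset_eq_degree,
        hleaf r (mem_union_left _ hr), Finset.card_singleton]
  have hNl2 : ∀ r ∈ R₂, H.neighborFinset r = {h₂} := by
    intro r hr
    refine (Finset.eq_of_subset_of_card_le ?_ ?_).symm
    · intro v hv
      rw [Finset.mem_singleton] at hv; subst hv
      rw [SimpleGraph.mem_neighborFinset]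
      exact (hspoke₂ r hr).symm
    · rw [SimpleGraph.card_neighborFinset_eq_degree,
        hleaf r (mem_union_right _ hr), Finset.card_singleton]
  -- values of w
  have hwh1 : w h₁ = c := by simp [hw]
  have hwh2 : w h₂ = -c := by simp [hw, h₁₂.symm]
  have hwo : w o = 0 := by simp [hw, h₀₁, h₀₂, hoR1, hoR2]
  have hwr1 : ∀ r ∈ R₁, w r = s := by
    intro r hr
    obtain ⟨-, hr1, hr2⟩ := hRnot r (mem_union_left _ hr)
    simp [hw, hr1, hr2, hr]
  have hwr2 : ∀ r ∈ R₂, w r = -s := by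
    intro r hr
    obtain ⟨-, hr1, hr2⟩ := hRnot r (mem_union_right _ hr)
    have : r ∉ R₁ := fun h => (Finset.disjoint_left.mp hRdisj h) hr
    simp [hw, hr1, hr2, this, hr]
  refine ⟨w, ?_, ?_, ?_⟩
  · intro h
    exact hc (by simpa [hwh1] using congrFun h h₁)
  · funext v
    rw [SimpleGraph.adjMatrix_mulVec_apply, Pi.smul_apply, smul_eq_mul]
    by_cases hv1 : v = h₁
    · subst hv1
      rw [hN1, Finset.sum_insert hoR1, hwo, zero_add, hwh1,
        Finset.sum_congr rfl hwr1, Finset.sum_const, hR₁card,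
        nsmul_eq_mul, hDs]
    by_cases hv2 : v = h₂
    · subst hv2
      rw [hN2, Finset.sum_insert hoR2, hwo, zero_add, hwh2,
        Finset.sum_congr rfl hwr2, Finset.sum_const, hR₂card,
        nsmul_eq_mul]
      rw [mul_neg, mul_neg, hDs]
    by_cases hvr1 : v ∈ R₁
    · rw [hNl1 v hvr1, Finset.sum_singleton, hwh1, hwr1 v hvr1,
        hcs v (mem_union_left _ hvr1)]
    by_cases hvr2 : v ∈ R₂
    · rw [hNl2 v hvr2, Finset.sum_singleton, hwh2, hwr2 v hvr2,
        hcs v (mem_union_right _ hvr2)]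
      ring
    by_cases hvo : v = o
    · rw [hvo]
      have h1m : h₁ ∈ H.neighborFinset o := by
        rw [SimpleGraph.mem_neighborFinset]; exact hbase₁.symm
      have h2m : h₂ ∈ H.neighborFinset o := by
        rw [SimpleGraph.mem_neighborFinset]; exact hbase₂.symm
      have hterm : ∀ u ∈ H.neighborFinset o,
          w u = (if u = h₁ then c else 0) + (if u = h₂ then -c else 0) := by
        intro u hu
        by_cases hu1 : u = h₁
        · subst hu1; simp [hwh1, h₁₂]
        by_cases hu2 : u = h₂
        · subst hu2; simp [hwh2, hu1]
        have hu3 : u ∉ R₁ := by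
          intro h
          have := hNl1 u h
          rw [SimpleGraph.mem_neighborFinset] at hu
          have : o ∈ H.neighborFinset u := by
            rw [SimpleGraph.mem_neighborFinset]; exact hu.symm
          rw [hNl1 u h, Finset.mem_singleton] at this
          exact h₀₁ this
        have hu4 : u ∉ R₂ := by
          intro h
          have : o ∈ H.neighborFinset u := by
            rw [SimpleGraph.mem_neighborFinset]
            exact (SimpleGraph.mem_neighborFinset H o u |>.mp hu).symm
          rw [hNl2 u h, Finset.mem_singleton] at this
          exact h₀₂ this
        simp [hw, hu1, hu2, hu3, hu4]
      rw [Finset.sum_congr rfl hterm, Finset.sum_add_distrib,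
        Finset.sum_ite_eq' _ h₁ (fun _ => c), Finset.sum_ite_eq' _ h₂ (fun _ => -c),
        if_pos h1m, if_pos h2m, hwo, add_neg_cancel, mul_zero]
    · -- generic vertex
      have : ∀ u ∈ H.neighborFinset v, w u = 0 := by
        intro u hu
        rw [SimpleGraph.mem_neighborFinset] at hu
        by_cases hu1 : u = h₁
        · have hv' : v ∈ H.neighborFinset h₁ := by
            rw [SimpleGraph.mem_neighborFinset, ← hu1]; exact hu.symm
          rw [hN1, Finset.mem_insert] at hv'
          rcases hv' with h | h
          · exact absurd h hvo
          · exact absurd h hvr1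
        by_cases hu2 : u = h₂
        · have hv' : v ∈ H.neighborFinset h₂ := by
            rw [SimpleGraph.mem_neighborFinset, ← hu2]; exact hu.symm
          rw [hN2, Finset.mem_insert] at hv'
          rcases hv' with h | h
          · exact absurd h hvo
          · exact absurd h hvr2
        by_cases hu3 : u ∈ R₁
        · have : v ∈ H.neighborFinset u := by
            rw [SimpleGraph.mem_neighborFinset]; exact hu.symm
          rw [hNl1 u hu3, Finset.mem_singleton] at this
          exact absurd this hv1
        by_cases hu4 : u ∈ R₂
        · have : v ∈ H.neighborFinset u := by
            rw [SimpleGraph.mem_neighborFinset]; exact hu.symm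
          rw [hNl2 u hu4, Finset.mem_singleton] at this
          exact absurd this hv2
        simp [hw, hu1, hu2, hu3, hu4]
      rw [Finset.sum_eq_zero this]
      simp [hw, hv1, hv2, hvr1, hvr2, hvo]
  · intro v hv
    by_contra hmem
    simp only [Finset.mem_union, Finset.mem_insert, Finset.mem_singleton, not_or] at hmem
    obtain ⟨⟨⟨hv1, hv2⟩, hv3⟩, hv4⟩ := hmem
    exact hv (by simp [hw, hv1, hv2, hv3, hv4])

/-- Lemma A.14: a star tuning fork of degree `D` rooted in a finite graph `H` produces the
eigenvalues `±√D` of the adjacency matrix of `H`, with eigenvectors supported on the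
`2D + 2` vertices `{h₁, h₂} ∪ R₁ ∪ R₂` of the two stars. -/
theorem star_tuning_fork_eigenvalues (V : Type) [Fintype V] [DecidableEq V]
    (H : SimpleGraph V) [DecidableRel H.Adj] (D : ℕ)
    (o h₁ h₂ : V) (R₁ R₂ : Finset V)
    -- the base, hubs and spokes are pairwise distinct
    (h₀₁ : o ≠ h₁) (h₀₂ : o ≠ h₂) (h₁₂ : h₁ ≠ h₂)
    (hR₁card : R₁.card = D) (hR₂card : R₂.card = D)
    (hRdisj : Disjoint R₁ R₂)
    (hRnot : ∀ v ∈ R₁ ∪ R₂, v ≠ o ∧ v ≠ h₁ ∧ v ≠ h₂)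
    -- both hubs are adjacent to the base
    (hbase₁ : H.Adj h₁ o) (hbase₂ : H.Adj h₂ o)
    -- each hub is adjacent to all of its spokes
    (hspoke₁ : ∀ v ∈ R₁, H.Adj h₁ v) (hspoke₂ : ∀ v ∈ R₂, H.Adj h₂ v)
    -- each hub has degree exactly D + 1 in H
    (hdeg₁ : H.degree h₁ = D + 1) (hdeg₂ : H.degree h₂ = D + 1)
    -- every spoke is a leaf of H
    (hleaf : ∀ v ∈ R₁ ∪ R₂, H.degree v = 1) :
    (∃ w : V → ℝ, w ≠ 0 ∧ (H.adjMatrix ℝ).mulVec w = Real.sqrt D • w ∧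
        ∀ v, w v ≠ 0 → v ∈ ({h₁, h₂} : Finset V) ∪ R₁ ∪ R₂) ∧
    (∃ w : V → ℝ, w ≠ 0 ∧ (H.adjMatrix ℝ).mulVec w = (-Real.sqrt D) • w ∧
        ∀ v, w v ≠ 0 → v ∈ ({h₁, h₂} : Finset V) ∪ R₁ ∪ R₂) := by
  rcases eq_or_ne D 0 with hD | hD
  · -- degenerate case D = 0 : both eigenvalues are 0
    have hR1e : R₁ = ∅ := Finset.card_eq_zero.mp (hR₁card.trans hD)
    have hR2e : R₂ = ∅ := Finset.card_eq_zero.mp (hR₂card.trans hD)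
    have hcs : ∀ v ∈ R₁ ∪ R₂, (1 : ℝ) = Real.sqrt D * 0 := by
      simp [hR1e, hR2e]
    have hcs' : ∀ v ∈ R₁ ∪ R₂, (1 : ℝ) = -Real.sqrt D * 0 := by
      simp [hR1e, hR2e]
    have hDs : (D : ℝ) * 0 = Real.sqrt D * 1 := by
      subst hD; simp
    have hDs' : (D : ℝ) * 0 = -Real.sqrt D * 1 := by
      subst hD; simp
    exact ⟨stf_key V H D o h₁ h₂ R₁ R₂ h₀₁ h₀₂ h₁₂ hR₁card hR₂card hRdisj hRnot
        hbase₁ hbase₂ hspoke₁ hspoke₂ hdeg₁ hdeg₂ hleaf (Real.sqrt D) 1 0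
        one_ne_zero hDs hcs,
      stf_key V H D o h₁ h₂ R₁ R₂ h₀₁ h₀₂ h₁₂ hR₁card hR₂card hRdisj hRnot
        hbase₁ hbase₂ hspoke₁ hspoke₂ hdeg₁ hdeg₂ hleaf (-Real.sqrt D) 1 0
        one_ne_zero hDs' hcs'⟩
  · have hDpos : (0 : ℝ) < D := by
      exact_mod_cast Nat.pos_of_ne_zero hD
    have hsq : Real.sqrt D ≠ 0 := by
      rw [Real.sqrt_ne_zero']; exact hDpos
    have hmul : Real.sqrt D * Real.sqrt D = (D : ℝ) :=
      Real.mul_self_sqrt (le_of_lt hDpos)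
    have hDs : (D : ℝ) * 1 = Real.sqrt D * Real.sqrt D := by
      rw [hmul, mul_one]
    have hDs' : (D : ℝ) * 1 = -Real.sqrt D * -Real.sqrt D := by
      rw [neg_mul_neg, hmul, mul_one]
    exact ⟨stf_key V H D o h₁ h₂ R₁ R₂ h₀₁ h₀₂ h₁₂ hR₁card hR₂card hRdisj hRnot
        hbase₁ hbase₂ hspoke₁ hspoke₂ hdeg₁ hdeg₂ hleaf (Real.sqrt D)
        (Real.sqrt D) 1 hsq hDs (fun v _ => (mul_one _).symm),
      stf_key V H D o h₁ h₂ R₁ R₂ h₀₁ h₀₂ h₁₂ hR₁card hR₂card hRdisj hRnot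
        hbase₁ hbase₂ hspoke₁ hspoke₂ hdeg₁ hdeg₂ hleaf (-Real.sqrt D)
        (-Real.sqrt D) 1 (neg_ne_zero.mpr hsq) hDs' (fun v _ => (mul_one _).symm)⟩
end
end

section
/- There is a universal constant C > 0 such that the following holds. Let n ≥ 1 be an integer, let 0 ≤ p ≤ n^{−1/2}, let D be a random variable with law Binomial(n, p), and let k be a natural number with k ≤ √n. Then |P(D = k) − ((pn)^k / k!)·e^{−pn}| ≤ C·(k²/n + p²·n)·((pn)^k / k!)·e^{−pn}. -/
open MeasureTheory

noncomputable section

private lemma exp_le_one_add_two_mul {x : ℝ} (h0 : 0 ≤ x) (h1 : x ≤ 1) :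
    Real.exp x ≤ 1 + 2 * x := by
  have h := Real.exp_bound (x := x) (by rwa [abs_of_nonneg h0]) (n := 1) one_pos
  have h2 : |Real.exp x - 1| ≤ |x| * 2 := by
    simpa [Finset.sum_range_one, Nat.factorial] using h
  rw [abs_of_nonneg h0] at h2
  have := (abs_le.1 h2).2
  linarith

set_option maxHeartbeats 2000000 in
/-- Lemma A.5 (Poisson approximation): if `D ~ Binomial(n, p)` with `p ≤ n^{−1/2}` and
`k ≤ √n`, then `P(D = k) = ((pn)^k / k!)·e^{−pn}·(1 + O(k²/n + p²n))`. -/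
theorem poisson_approximation :
    ∃ C : ℝ, 0 < C ∧
    ∀ (Ω : Type) (_ : MeasurableSpace Ω) (P : Measure Ω) (_ : IsProbabilityMeasure P)
      (n : ℕ) (p : ℝ) (D : Ω → ℕ) (k : ℕ),
      1 ≤ n → 0 ≤ p → p ≤ (n : ℝ) ^ (-(1 : ℝ) / 2) →
      -- D has law Binomial(n, p)
      (∀ j : ℕ, P {ω | D ω = j} =
        ENNReal.ofReal ((n.choose j : ℝ) * p ^ j * (1 - p) ^ (n - j))) →
      (k : ℝ) ≤ Real.sqrt n →
      |(P {ω | D ω = k}).toReal -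
          (p * n) ^ k / (Nat.factorial k) * Real.exp (-(p * n))| ≤
        C * ((k : ℝ) ^ 2 / n + p ^ 2 * n) *
          ((p * n) ^ k / (Nat.factorial k) * Real.exp (-(p * n))) := by
  refine ⟨4, by norm_num, ?_⟩
  intro Ω _ P _ n p D k hn hp hpn hD hk
  have hn0 : (0:ℝ) < n := by exact_mod_cast Nat.pos_of_ne_zero (by omega)
  have hn1 : (1:ℝ) ≤ n := by exact_mod_cast hn
  have hsq : Real.sqrt n * Real.sqrt n = n := Real.mul_self_sqrt hn0.le
  have hsqnn : (0:ℝ) ≤ Real.sqrt n := Real.sqrt_nonneg _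
  have hk0 : (0:ℝ) ≤ (k:ℝ) := Nat.cast_nonneg k
  have hk2 : (k:ℝ)^2 ≤ n := by nlinarith
  have hkn' : (k:ℝ) ≤ n := by nlinarith [sq_nonneg ((k:ℝ) - 1)]
  have hkn : k ≤ n := by exact_mod_cast hkn'
  have hcast : ((n-k:ℕ):ℝ) = (n:ℝ) - k := by
    rw [Nat.cast_sub hkn]
  have hpsqrt : p * Real.sqrt n ≤ 1 := by
    have h2 : (n:ℝ) ^ (-(1:ℝ)/2) * Real.sqrt n = 1 := by
      rw [Real.sqrt_eq_rpow, ← Real.rpow_add hn0]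
      norm_num
    calc p * Real.sqrt n ≤ (n:ℝ) ^ (-(1:ℝ)/2) * Real.sqrt n :=
          mul_le_mul_of_nonneg_right hpn hsqnn
      _ = 1 := h2
  have hs1 : 1 ≤ Real.sqrt n := by nlinarith
  have hp1 : p ≤ 1 := by nlinarith
  have h1p : (0:ℝ) ≤ 1 - p := by linarith
  have hpk : p * k ≤ 1 := by nlinarith [mul_le_mul_of_nonneg_left hk hp]
  -- abbreviations
  have hb0 : (0:ℝ) ≤ (n.choose k : ℝ) * p ^ k * (1 - p) ^ (n - k) := by positivity
  rw [hD k, ENNReal.toReal_ofReal hb0]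
  set b : ℝ := (n.choose k : ℝ) * p ^ k * (1 - p) ^ (n - k) with hbdef
  set q : ℝ := (p * n) ^ k / (Nat.factorial k) * Real.exp (-(p * n)) with hqdef
  set A : ℝ := (k:ℝ)^2 / n with hAdef
  set B : ℝ := p^2 * n with hBdef
  have hq0 : 0 ≤ q := by rw [hqdef]; positivity
  have hA0 : 0 ≤ A := by rw [hAdef]; positivity
  have hB0 : 0 ≤ B := by rw [hBdef]; positivity
  clear_value b q A B
  clear hD D
  have hfac0 : (0:ℝ) < (Nat.factorial k : ℝ) := by positivity
  -- 2pk ≤ A + B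
  have h2pk : 2 * (p * k) ≤ A + B := by
    have hkey : A + B - 2 * (p * k) = ((k:ℝ) - p * n)^2 / n := by
      rw [hAdef, hBdef]
      field_simp
      ring
    nlinarith [sq_nonneg ((k:ℝ) - p * n), div_nonneg (sq_nonneg ((k:ℝ) - p * n)) hn0.le]
  rw [abs_sub_le_iff]
  constructor
  · -- upper bound : b - q ≤ 4 (A+B) q
    have hnat1 : Nat.factorial k * n.choose k ≤ n ^ k :=
      Nat.descFactorial_eq_factorial_mul_choose n k ▸ Nat.descFactorial_le_pow n k
    have hdesc_le : (Nat.factorial k : ℝ) * (n.choose k : ℝ) ≤ (n:ℝ)^k := by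
      exact_mod_cast hnat1
    have step1 : (n.choose k : ℝ) * p ^ k ≤ (p * n)^k / (Nat.factorial k) := by
      rw [le_div_iff₀ hfac0, mul_pow]
      calc (n.choose k : ℝ) * p ^ k * (Nat.factorial k)
          = ((Nat.factorial k : ℝ) * (n.choose k : ℝ)) * p ^ k := by ring
        _ ≤ (n:ℝ)^k * p ^ k := by
            exact mul_le_mul_of_nonneg_right hdesc_le (by positivity)
        _ = p ^ k * (n:ℝ)^k := by ring
    have step2 : (1 - p) ^ (n - k) ≤ Real.exp (-(p*n)) * Real.exp (p * k) := by
      have e1 : 1 - p ≤ Real.exp (-p) := by linarith [Real.add_one_le_exp (-p)]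
      have e2 : (1 - p) ^ (n - k) ≤ Real.exp (-p) ^ (n - k) := pow_le_pow_left₀ h1p e1 _
      have e3 : Real.exp (-p) ^ (n - k) = Real.exp (((n-k:ℕ):ℝ) * (-p)) :=
        (Real.exp_nat_mul _ _).symm
      have e4 : ((n-k:ℕ):ℝ) * (-p) = -(p*n) + p * k := by rw [hcast]; ring
      calc (1 - p) ^ (n - k) ≤ Real.exp (-p) ^ (n - k) := e2
        _ = Real.exp (-(p*n) + p * k) := by rw [e3, e4]
        _ = Real.exp (-(p*n)) * Real.exp (p * k) := Real.exp_add _ _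
    have hub : b ≤ q * Real.exp (p * k) := by
      calc b = ((n.choose k : ℝ) * p ^ k) * (1 - p) ^ (n - k) := by rw [hbdef]
        _ ≤ ((p * n)^k / (Nat.factorial k)) * (Real.exp (-(p*n)) * Real.exp (p * k)) := by
            refine mul_le_mul step1 step2 (by positivity) (by positivity)
        _ = q * Real.exp (p * k) := by rw [hqdef]; ring
    have hexp2 : Real.exp (p * k) ≤ 1 + 2 * (p * k) :=
      exp_le_one_add_two_mul (by positivity) hpk
    have hub2 : b ≤ q * (1 + 2 * (p * k)) :=
      hub.trans (mul_le_mul_of_nonneg_left hexp2 hq0)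
    have hmul : q * (2 * (p * k)) ≤ q * (A + B) := mul_le_mul_of_nonneg_left h2pk hq0
    linarith [hub2, hmul, mul_nonneg hA0 hq0, mul_nonneg hB0 hq0]
  · -- lower bound : q - b ≤ 4 (A+B) q
    by_cases hcase : 1 ≤ 4 * (A + B)
    · have hmul : q * 1 ≤ q * (4 * (A + B)) := mul_le_mul_of_nonneg_left hcase hq0
      linarith [hb0, hmul]
    · push_neg at hcase
      have hBsmall : B < 1/4 := by linarith
      have hAsmall : A < 1/4 := by linarith
      have hp2n : p^2 * (n:ℝ) < 1/4 := by rw [← hBdef]; exact hBsmall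
      have hp2 : p^2 < 1/4 := by
        nlinarith [mul_nonneg (sq_nonneg p) (by linarith : (0:ℝ) ≤ (n:ℝ) - 1)]
      have hphalf : p ≤ 1/2 := by nlinarith
      -- key pointwise bound: exp(-(p+2p^2)) ≤ 1-p for 0 ≤ p ≤ 1/2
      have ht : Real.exp (-(p + 2*p^2)) ≤ 1 - p := by
        have h1 : 1 ≤ (1 - p) * Real.exp (p + 2*p^2) := by
          nlinarith [Real.add_one_le_exp (p + 2*p^2)]
        have h2 : Real.exp (-(p + 2*p^2)) * Real.exp (p + 2*p^2) = 1 := by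
          rw [← Real.exp_add, neg_add_cancel, Real.exp_zero]
        have h3 := mul_le_mul_of_nonneg_left h1 (Real.exp_pos (-(p + 2*p^2))).le
        have h4 : p * (Real.exp (-(p + 2*p^2)) * Real.exp (p + 2*p^2)) = p := by
          rw [h2, mul_one]
        nlinarith [h3, h2, h4]
      -- lower bound for (1-p)^(n-k)
      have l2 : Real.exp (-(p*n)) * (1 - 2*B) ≤ (1 - p) ^ (n - k) := by
        have a1 : Real.exp (-(p + 2*p^2)) ^ (n - k) ≤ (1 - p) ^ (n - k) :=
          pow_le_pow_left₀ (Real.exp_pos _).le ht _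
        have a2 : Real.exp (-(p + 2*p^2)) ^ (n - k)
            = Real.exp (((n-k:ℕ):ℝ) * (-(p + 2*p^2))) := (Real.exp_nat_mul _ _).symm
        have a3 : -(p*n) + -(2*B) ≤ ((n-k:ℕ):ℝ) * (-(p + 2*p^2)) := by
          rw [hcast, hBdef]
          nlinarith [mul_nonneg hp hk0, mul_nonneg (mul_nonneg hp hp) hk0]
        calc Real.exp (-(p*n)) * (1 - 2*B)
            ≤ Real.exp (-(p*n)) * Real.exp (-(2*B)) := by
              refine mul_le_mul_of_nonneg_left ?_ (Real.exp_pos _).le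
              linarith [Real.add_one_le_exp (-(2*B))]
          _ = Real.exp (-(p*n) + -(2*B)) := (Real.exp_add _ _).symm
          _ ≤ Real.exp (((n-k:ℕ):ℝ) * (-(p + 2*p^2))) := Real.exp_le_exp.2 a3
          _ = Real.exp (-(p + 2*p^2)) ^ (n - k) := a2.symm
          _ ≤ (1 - p) ^ (n - k) := a1
      -- lower bound for choose * p^k
      have hcast2 : ((n+1-k:ℕ):ℝ) = (n:ℝ) + 1 - k := by
        rw [Nat.cast_sub (by omega)]; push_cast; ring
      have hber : (n:ℝ)^k * (1 - A) ≤ ((n+1-k:ℕ):ℝ)^k := by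
        set a : ℝ := (1 - (k:ℝ))/n with hadef
        have ha2 : -2 ≤ a := by
          rw [hadef, le_div_iff₀ hn0]; nlinarith
        have hbern := one_add_mul_le_pow ha2 k
        have h1a : (n:ℝ) * (1 + a) = (n:ℝ) + 1 - k := by
          rw [hadef]
          field_simp
          ring
        have hstep : 1 - A ≤ 1 + (k:ℝ) * a := by
          have : 1 + (k:ℝ) * a - (1 - A) = (k:ℝ)/n := by
            rw [hadef, hAdef]; field_simp; ring
          nlinarith [div_nonneg hk0 hn0.le]
        calc (n:ℝ)^k * (1 - A) ≤ (n:ℝ)^k * (1 + (k:ℝ) * a) := by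
              exact mul_le_mul_of_nonneg_left hstep (by positivity)
          _ ≤ (n:ℝ)^k * (1 + a)^k := by
              exact mul_le_mul_of_nonneg_left hbern (by positivity)
          _ = ((n:ℝ) * (1 + a))^k := (mul_pow _ _ _).symm
          _ = ((n+1-k:ℕ):ℝ)^k := by rw [h1a, hcast2]
      have hnat2 : (n+1-k)^k ≤ Nat.factorial k * n.choose k :=
        Nat.descFactorial_eq_factorial_mul_choose n k ▸ Nat.pow_sub_le_descFactorial n k
      have hdesc_ge : ((n+1-k:ℕ):ℝ)^k ≤ (Nat.factorial k : ℝ) * (n.choose k : ℝ) := by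
        exact_mod_cast hnat2
      have l1 : (p * n)^k / (Nat.factorial k) * (1 - A) ≤ (n.choose k : ℝ) * p ^ k := by
        rw [div_mul_eq_mul_div, div_le_iff₀ hfac0, mul_pow]
        calc p^k * (n:ℝ)^k * (1 - A)
            ≤ p^k * ((n+1-k:ℕ):ℝ)^k := by
              rw [mul_assoc]
              exact mul_le_mul_of_nonneg_left hber (by positivity)
          _ ≤ p^k * ((Nat.factorial k : ℝ) * (n.choose k : ℝ)) := by
              exact mul_le_mul_of_nonneg_left hdesc_ge (by positivity)
          _ = (n.choose k : ℝ) * p ^ k * (Nat.factorial k) := by ring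
      -- combine
      have hA1 : A ≤ 1 := by rw [hAdef, div_le_one hn0]; exact hk2
      have hL1nn : 0 ≤ (p * n)^k / (Nat.factorial k) * (1 - A) := by
        apply mul_nonneg (by positivity); linarith
      have hL2nn : 0 ≤ Real.exp (-(p*n)) * (1 - 2*B) := by
        apply mul_nonneg (Real.exp_pos _).le; linarith
      have hblow : ((p * n)^k / (Nat.factorial k) * (1 - A)) *
          (Real.exp (-(p*n)) * (1 - 2*B)) ≤ b := by
        calc ((p * n)^k / (Nat.factorial k) * (1 - A)) * (Real.exp (-(p*n)) * (1 - 2*B))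
            ≤ ((n.choose k : ℝ) * p ^ k) * ((1 - p) ^ (n - k)) :=
              mul_le_mul l1 l2 hL2nn (by positivity)
          _ = b := by rw [hbdef]
      have hq1A : ((p * n)^k / (Nat.factorial k) * (1 - A)) * (Real.exp (-(p*n)) * (1 - 2*B))
          = q * ((1 - A) * (1 - 2*B)) := by rw [hqdef]; ring
      rw [hq1A] at hblow
      linarith [hblow, mul_nonneg hq0 hA0, mul_nonneg hq0 hB0,
        mul_nonneg (mul_nonneg hq0 hA0) hB0]
end
end
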